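/- arXiv:1403.1898 — 2 statements merged into one kernel-verified Lean document; each statement's English description precedes it below -/
import Mathlib

section
/- Suppose Π = (P, L) is a Fischer space, i.e., for every x ∈ P the central map t(x) maps lines to lines. Then in the Matsuo algebra M = M(Π, η/2, F), every basis element a_p (p ∈ P) is a primitive axis of Jordan type η; that is: a_p·a_p = a_p; M is the internal direct sum of the eigenspaces M_1(a_p), M_0(a_p), M_η(a_p) of the left-multiplication operator by a_p; M_1(a_p) = F • a_p; M_0(a_p)·M_0(a_p) ⊆ M_0(a_p); and, writing M_+ = M_1(a_p) + M_0(a_p) and M_- = M_η(a_p), one has M_+·M_+ ⊆ M_+, M_+·M_- ⊆ M_-, and M_-·M_- ⊆ M_+. Consequently M is a primitive axial algebra of Jordan type η generated by the axes {a_p : p ∈ P}. -/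
/-- The `lam`-eigenspace of the left-multiplication operator by `x`. -/
def eigSp (F : Type*) {A : Type*} [Field F] [NonUnitalNonAssocCommRing A] [Module F A]
    [SMulCommClass F A A] (x : A) (lam : F) : Submodule F A where
  carrier := {y | x * y = lam • y}
  add_mem' := by
    intro y z hy hz
    simp only [Set.mem_setOf_eq] at *
    rw [mul_add, hy, hz, smul_add]
  zero_mem' := by simp
  smul_mem' := by
    intro c y hy
    simp only [Set.mem_setOf_eq] at *
    rw [mul_smul_comm, hy, smul_smul, smul_smul, mul_comm]

/-- Two points are collinear if some line contains both. -/
def Collinear' {P : Type*} (L : Set (Finset P)) (p q : P) : Prop :=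
  ∃ l ∈ L, p ∈ l ∧ q ∈ l

/-- `t` is the central map of `Π = (P, L)` with center `x`:  it fixes `x` and every point
not collinear with `x`, and for every line `{x, y, z}` it sends `y` to `z`. -/
def IsCentralMap {P : Type*} [DecidableEq P] (L : Set (Finset P)) (x : P) (t : P → P) :
    Prop :=
  t x = x ∧
  (∀ y : P, y ≠ x → ¬ Collinear' L x y → t y = y) ∧
  (∀ y z : P, ({x, y, z} : Finset P) ∈ L → t y = z)

set_option linter.unusedSectionVars false

section Geo
variable {P : Type*} [DecidableEq P] {L : Set (Finset P)}

lemma lswap23 {x y z : P} (h : ({x,y,z} : Finset P) ∈ L) : ({x,z,y} : Finset P) ∈ L := by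
  rwa [Finset.pair_comm] at h

lemma lswap12 {x y z : P} (h : ({x,y,z} : Finset P) ∈ L) : ({y,x,z} : Finset P) ∈ L := by
  rwa [Finset.insert_comm] at h

lemma lrot {x y z : P} (h : ({x,y,z} : Finset P) ∈ L) : ({y,z,x} : Finset P) ∈ L :=
  lswap23 (lswap12 h)

lemma coll_symm {u v : P} (h : Collinear' L u v) : Collinear' L v u := by
  obtain ⟨l, hl, h1, h2⟩ := h; exact ⟨l, hl, h2, h1⟩

lemma coll_of_mem {l : Finset P} (hl : l ∈ L) {u v : P} (hu : u ∈ l) (hv : v ∈ l) :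
    Collinear' L u v := ⟨l, hl, hu, hv⟩

variable (hcard : ∀ l ∈ L, l.card = 3)
variable (hunique : ∀ l₁ ∈ L, ∀ l₂ ∈ L, ∀ p q : P,
      p ≠ q → p ∈ l₁ → q ∈ l₁ → p ∈ l₂ → q ∈ l₂ → l₁ = l₂)

include hcard

lemma not_line_aa {x z : P} (h : ({x,x,z} : Finset P) ∈ L) : False := by
  have h3 := hcard _ h
  have hle : ({x,x,z} : Finset P).card ≤ 2 :=
    le_trans (Finset.card_le_card (fun w hw => by simp at hw ⊢; tauto))
      (le_trans (Finset.card_insert_le x {z}) (by simp))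
  omega

lemma mem_line_ne {x y z : P}
    (h : ({x, y, z} : Finset P) ∈ L) : x ≠ y ∧ x ≠ z ∧ y ≠ z := by
  refine ⟨?_, ?_, ?_⟩ <;> rintro rfl
  · exact not_line_aa hcard h
  · exact not_line_aa hcard (lrot (lrot h))
  · exact not_line_aa hcard (lrot h)

lemma line_third {l : Finset P} (hl : l ∈ L) {x y : P}
    (hx : x ∈ l) (hy : y ∈ l) (hxy : x ≠ y) :
    ∃ z, z ≠ x ∧ z ≠ y ∧ l = {x, y, z} := by
  have h3 := hcard _ hl
  have hy' : y ∈ l.erase x := Finset.mem_erase.2 ⟨hxy.symm, hy⟩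
  have h2 : (l.erase x).card = 2 := by rw [Finset.card_erase_of_mem hx, h3]
  have h1 : ((l.erase x).erase y).card = 1 := by rw [Finset.card_erase_of_mem hy', h2]
  obtain ⟨z, hz⟩ := Finset.card_eq_one.1 h1
  have hzmem : z ∈ (l.erase x).erase y := by rw [hz]; exact Finset.mem_singleton_self z
  have hz1 : z ≠ y := (Finset.mem_erase.1 hzmem).1
  have hz2 : z ≠ x := (Finset.mem_erase.1 (Finset.mem_erase.1 hzmem).2).1
  have hz3 : z ∈ l := Finset.mem_of_mem_erase (Finset.mem_of_mem_erase hzmem)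
  refine ⟨z, hz2, hz1, ?_⟩
  have hsub : ({x, y, z} : Finset P) ⊆ l := by
    intro w hw; simp only [Finset.mem_insert, Finset.mem_singleton] at hw
    rcases hw with rfl | rfl | rfl <;> assumption
  have hcard3 : ({x, y, z} : Finset P).card = 3 := by
    rw [Finset.card_insert_of_notMem (by simp [hxy, hz2.symm]),
      Finset.card_insert_of_notMem (by simp [hz1.symm]), Finset.card_singleton]
  exact (Finset.eq_of_subset_of_card_le hsub (by rw [h3, hcard3])).symm

open Classical in
noncomputable def tc (L : Set (Finset P)) (x y : P) : P :=
  if h : ∃ z, z ≠ x ∧ z ≠ y ∧ ({x, y, z} : Finset P) ∈ L then h.choose else y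

lemma tc_self (x : P) : tc L x x = x := by
  rw [tc, dif_neg]
  rintro ⟨z, hz1, hz2, hzL⟩
  exact not_line_aa hcard hzL

omit hcard in
lemma tc_perp {x y : P} (h : ¬ Collinear' L x y) : tc L x y = y := by
  rw [tc, dif_neg]
  rintro ⟨z, _, _, hzL⟩
  exact h ⟨_, hzL, by simp, by simp⟩

include hunique

lemma tc_line {x y z : P} (h : ({x, y, z} : Finset P) ∈ L) : tc L x y = z := by
  obtain ⟨hxy, hxz, hyz⟩ := mem_line_ne hcard h
  have hex : ∃ w, w ≠ x ∧ w ≠ y ∧ ({x, y, w} : Finset P) ∈ L := ⟨z, hxz.symm, hyz.symm, h⟩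
  rw [tc, dif_pos hex]
  obtain ⟨hwx, hwy, hwL⟩ := hex.choose_spec
  have heq : ({x, y, hex.choose} : Finset P) = {x, y, z} :=
    hunique _ hwL _ h x y hxy (by simp) (by simp) (by simp) (by simp)
  have hmem : hex.choose ∈ ({x, y, z} : Finset P) := heq ▸ (by simp)
  simp only [Finset.mem_insert, Finset.mem_singleton] at hmem
  rcases hmem with h' | h' | h'
  · exact absurd h' hwx
  · exact absurd h' hwy
  · exact h'

lemma tc_central (x : P) : IsCentralMap L x (tc L x) :=
  ⟨tc_self hcard x, fun _ _ hy => tc_perp hy, fun _ _ h => tc_line hcard hunique h⟩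

lemma coll_line {p w : P} (h : Collinear' L p w) (hpw : p ≠ w) :
    ({p, w, tc L p w} : Finset P) ∈ L ∧ tc L p w ≠ p ∧ tc L p w ≠ w := by
  obtain ⟨l, hl, hp, hw⟩ := h
  obtain ⟨z, hz1, hz2, rfl⟩ := line_third hcard hl hp hw hpw
  rw [tc_line hcard hunique hl]
  exact ⟨hl, hz1, hz2⟩

lemma tc_invol (x y : P) : tc L x (tc L x y) = y := by
  by_cases hxy : x = y
  · subst hxy; rw [tc_self hcard, tc_self hcard]
  by_cases h : Collinear' L x y
  · obtain ⟨hl, _, _⟩ := coll_line hcard hunique h hxy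
    exact tc_line hcard hunique (lswap23 hl)
  · rw [tc_perp h, tc_perp h]

variable (hfischer : ∀ (x : P) (t : P → P), IsCentralMap L x t → ∀ l ∈ L, l.image t ∈ L)

include hfischer

lemma tc_image {x u v w : P} (h : ({u, v, w} : Finset P) ∈ L) :
    ({tc L x u, tc L x v, tc L x w} : Finset P) ∈ L := by
  have := hfischer x (tc L x) (tc_central hcard hunique x) _ h
  rwa [Finset.image_insert, Finset.image_insert, Finset.image_singleton] at this

lemma tc_coll {x u v : P} (h : Collinear' L u v) :
    Collinear' L (tc L x u) (tc L x v) := by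
  obtain ⟨l, hl, hu, hv⟩ := h
  exact ⟨l.image (tc L x), hfischer x _ (tc_central hcard hunique x) _ hl,
    Finset.mem_image_of_mem _ hu, Finset.mem_image_of_mem _ hv⟩

lemma tc_ncoll {x u v : P} (h : ¬ Collinear' L u v) :
    ¬ Collinear' L (tc L x u) (tc L x v) := fun hc => h (by
  have := tc_coll hcard hunique hfischer (x := x) hc
  rwa [tc_invol hcard hunique, tc_invol hcard hunique] at this)

end Geo

section Geo2
variable {P : Type*} [DecidableEq P] {L : Set (Finset P)}
variable (hcard : ∀ l ∈ L, l.card = 3)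
variable (hunique : ∀ l₁ ∈ L, ∀ l₂ ∈ L, ∀ p q : P,
      p ≠ q → p ∈ l₁ → q ∈ l₁ → p ∈ l₂ → q ∈ l₂ → l₁ = l₂)
variable (hfischer : ∀ (x : P) (t : P → P), IsCentralMap L x t → ∀ l ∈ L, l.image t ∈ L)

include hcard hunique hfischer

/-- GA: the line joining two points non-collinear with `p` avoids the "perp" of `p`. -/
lemma fsGA {p q q' w : P} (hq : ¬Collinear' L p q) (hq' : ¬Collinear' L p q')
    (hl : ({q, q', w} : Finset P) ∈ L) : w ≠ p ∧ ¬Collinear' L p w := by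
  obtain ⟨hqq', hqw, hq'w⟩ := mem_line_ne hcard hl
  have hwp : w ≠ p := by rintro rfl; exact hq (coll_of_mem hl (by simp) (by simp))
  refine ⟨hwp, fun hc => ?_⟩
  obtain ⟨hL2, hu1, hu2⟩ := coll_line hcard hunique hc (Ne.symm hwp)
  have himg : ({q, q', tc L p w} : Finset P) ∈ L := by
    have := tc_image hcard hunique hfischer (x := p) hl
    rwa [tc_perp hq, tc_perp hq'] at this
  have heq : ({q, q', tc L p w} : Finset P) = {q, q', w} :=
    hunique _ himg _ hl q q' hqq' (by simp) (by simp) (by simp) (by simp)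
  have hmem : tc L p w ∈ ({q, q', w} : Finset P) := heq ▸ (by simp)
  have h1 : tc L p w ≠ q := by rintro h; exact hq (h ▸ coll_of_mem hL2 (by simp) (by simp))
  have h2 : tc L p w ≠ q' := by rintro h; exact hq' (h ▸ coll_of_mem hL2 (by simp) (by simp))
  simp only [Finset.mem_insert, Finset.mem_singleton, h1, h2, false_or] at hmem
  exact hu2 hmem

/-- GB: for `q ⟂ p`, a line `{q,r,w}` meeting a line `{p,r,s}` at `r`. -/
lemma fsGB {p q r s w : P} (hq : ¬Collinear' L p q) (hl1 : ({p,r,s} : Finset P) ∈ L)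
    (hlw : ({q,r,w} : Finset P) ∈ L) :
    w ≠ p ∧ Collinear' L p w ∧ ({q, s, tc L p w} : Finset P) ∈ L ∧
      ({p, w, tc L p w} : Finset P) ∈ L ∧ tc L p w ≠ w := by
  obtain ⟨hpr, hps, hrs⟩ := mem_line_ne hcard hl1
  obtain ⟨hqr, hqw, hrw⟩ := mem_line_ne hcard hlw
  have himg : ({q, s, tc L p w} : Finset P) ∈ L := by
    have := tc_image hcard hunique hfischer (x := p) hlw
    rwa [tc_perp hq, tc_line hcard hunique hl1] at this
  have hwp : w ≠ p := by rintro rfl; exact hq (coll_of_mem hlw (by simp) (by simp))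
  have hcoll : Collinear' L p w := by
    by_contra hnc
    rw [tc_perp hnc] at himg
    have hqw' : q ≠ w := hqw
    have heq : ({q, r, w} : Finset P) = {q, s, w} :=
      hunique _ hlw _ himg q w hqw' (by simp) (by simp) (by simp) (by simp)
    have hrmem : r ∈ ({q, s, w} : Finset P) := heq ▸ (by simp)
    have hrq : r ≠ q := Ne.symm hqr
    simp only [Finset.mem_insert, Finset.mem_singleton, hrq, hrw, or_false, false_or] at hrmem
    exact hrs hrmem
  obtain ⟨hL2, _, hne⟩ := coll_line hcard hunique hcoll (Ne.symm hwp)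
  exact ⟨hwp, hcoll, himg, hL2, hne⟩

/-- GC: two distinct lines through `p` cannot be completely non-collinear. -/
lemma fsGC {p r s r' s' : P}
    (hl1 : ({p,r,s} : Finset P) ∈ L) (hl2 : ({p,r',s'} : Finset P) ∈ L)
    (h1 : r' ≠ r) (h2 : r' ≠ s) (h3 : s' ≠ r) (h4 : s' ≠ s) :
    Collinear' L r r' ∨ Collinear' L r s' := by
  by_contra hcon
  push_neg at hcon
  obtain ⟨hA, hB⟩ := hcon
  obtain ⟨hpr, hps, hrs⟩ := mem_line_ne hcard hl1
  obtain ⟨hpr', hps', hr's'⟩ := mem_line_ne hcard hl2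
  have himg := tc_image hcard hunique hfischer (x := r) hl2
  rw [tc_line hcard hunique (lswap12 hl1), tc_perp hA, tc_perp hB] at himg
  have heq : ({s, r', s'} : Finset P) = {p, r', s'} :=
    hunique _ himg _ hl2 r' s' hr's' (by simp) (by simp) (by simp) (by simp)
  have hmem : s ∈ ({p, r', s'} : Finset P) := heq ▸ (by simp)
  simp only [Finset.mem_insert, Finset.mem_singleton] at hmem
  rcases hmem with h | h | h
  · exact hps h.symm
  · exact h2 h.symm
  · exact h4 h.symm
end Geo2

section Geo3
variable {P : Type*} [DecidableEq P] {L : Set (Finset P)}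
variable (hcard : ∀ l ∈ L, l.card = 3)
variable (hunique : ∀ l₁ ∈ L, ∀ l₂ ∈ L, ∀ p q : P,
      p ≠ q → p ∈ l₁ → q ∈ l₁ → p ∈ l₂ → q ∈ l₂ → l₁ = l₂)
variable (hfischer : ∀ (x : P) (t : P → P), IsCentralMap L x t → ∀ l ∈ L, l.image t ∈ L)

include hcard hunique

/-- If `{r,r',w}` is a line with `w = p`, and `{p,r,s}`, `{p,r',s'}` are lines with
`r' ∉ {r,s}`, we get a contradiction. -/
lemma fs_aux_wp {p r s r' s' w : P}
    (hl1 : ({p,r,s} : Finset P) ∈ L) (hl2 : ({p,r',s'} : Finset P) ∈ L)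
    (h1 : r' ≠ r) (h2 : r' ≠ s)
    (hlw : ({r,r',w} : Finset P) ∈ L) (hw : w = p) : False := by
  obtain ⟨hpr, hps, hrs⟩ := mem_line_ne hcard hl1
  obtain ⟨hpr', hps', hr's'⟩ := mem_line_ne hcard hl2
  rw [hw] at hlw
  have heq : ({r,r',p} : Finset P) = {p,r,s} :=
    hunique _ hlw _ hl1 p r hpr (by simp) (by simp) (by simp) (by simp)
  have hm : r' ∈ ({p,r,s} : Finset P) := heq ▸ (by simp)
  simp only [Finset.mem_insert, Finset.mem_singleton] at hm
  rcases hm with h | h | h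
  · exact hpr' h.symm
  · exact h1 h
  · exact h2 h

include hfischer

/-- GD: case (b): the third point of a cross line is non-collinear with `p`. -/
lemma fsGD {p r s r' s' w : P}
    (hl1 : ({p,r,s} : Finset P) ∈ L) (hl2 : ({p,r',s'} : Finset P) ∈ L)
    (h1 : r' ≠ r) (h2 : r' ≠ s) (h3 : s' ≠ r) (h4 : s' ≠ s)
    (hlw : ({r,r',w} : Finset P) ∈ L) (hrs' : ¬Collinear' L r s') :
    w ≠ p ∧ ¬Collinear' L p w ∧ ({s,s',w} : Finset P) ∈ L := by
  obtain ⟨hpr, hps, hrs⟩ := mem_line_ne hcard hl1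
  obtain ⟨hpr', hps', hr's'⟩ := mem_line_ne hcard hl2
  obtain ⟨hrr'', hrw, hr'w⟩ := mem_line_ne hcard hlw
  have hwp : w ≠ p := fun h => fs_aux_wp hcard hunique hl1 hl2 h1 h2 hlw h
  have himg0 : ({s, s', tc L p w} : Finset P) ∈ L := by
    have := tc_image hcard hunique hfischer (x := p) hlw
    rwa [tc_line hcard hunique hl1, tc_line hcard hunique hl2] at this
  have hnc : ¬Collinear' L p w := by
    by_contra hc
    obtain ⟨hLu, hup, huw⟩ := coll_line hcard hunique hc (Ne.symm hwp)
    have hns'r : ¬Collinear' L s' r := fun h => hrs' (coll_symm h)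
    have himg2 : ({r', r, tc L p w} : Finset P) ∈ L := by
      have := tc_image hcard hunique hfischer (x := s') hl1
      rwa [tc_line hcard hunique (lrot (lrot hl2)), tc_perp hns'r,
        tc_line hcard hunique (lswap12 himg0)] at this
    have hur : tc L p w ≠ r := by
      intro h
      rw [h] at hLu
      have heqA : ({p,w,r} : Finset P) = {p,r,s} :=
        hunique _ hLu _ hl1 p r hpr (by simp) (by simp) (by simp) (by simp)
      have hwmem : w ∈ ({p,r,s} : Finset P) := heqA ▸ (by simp)
      simp only [Finset.mem_insert, Finset.mem_singleton] at hwmem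
      rcases hwmem with h' | h' | h'
      · exact hwp h'
      · exact hrw h'.symm
      · rw [h'] at hlw
        have heqB : ({r,r',s} : Finset P) = {p,r,s} :=
          hunique _ hlw _ hl1 r s hrs (by simp) (by simp) (by simp) (by simp)
        have : r' ∈ ({p,r,s} : Finset P) := heqB ▸ (by simp)
        simp only [Finset.mem_insert, Finset.mem_singleton] at this
        rcases this with h'' | h'' | h''
        · exact hpr' h''.symm
        · exact h1 h''
        · exact h2 h''
    have hur' : tc L p w ≠ r' := by
      intro h
      rw [h] at hLu
      have heqA : ({p,w,r'} : Finset P) = {p,r',s'} :=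
        hunique _ hLu _ hl2 p r' hpr' (by simp) (by simp) (by simp) (by simp)
      have hwmem : w ∈ ({p,r',s'} : Finset P) := heqA ▸ (by simp)
      simp only [Finset.mem_insert, Finset.mem_singleton] at hwmem
      rcases hwmem with h' | h' | h'
      · exact hwp h'
      · exact hr'w h'.symm
      · rw [h'] at hlw
        exact hrs' (coll_of_mem hlw (by simp) (by simp))
    have heq : ({r', r, tc L p w} : Finset P) = {r,r',w} :=
      hunique _ himg2 _ hlw r r' hrr'' (by simp) (by simp) (by simp) (by simp)
    have humem : tc L p w ∈ ({r,r',w} : Finset P) := heq ▸ (by simp)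
    simp only [Finset.mem_insert, Finset.mem_singleton] at humem
    rcases humem with h | h | h
    · exact hur h
    · exact hur' h
    · exact huw h
  rw [tc_perp hnc] at himg0
  exact ⟨hwp, hnc, himg0⟩

/-- GE: case (c): the third point of a cross line is collinear with `p`. -/
lemma fsGE {p r s r' s' w1 w2 : P}
    (hl1 : ({p,r,s} : Finset P) ∈ L) (hl2 : ({p,r',s'} : Finset P) ∈ L)
    (h1 : r' ≠ r) (h2 : r' ≠ s) (h3 : s' ≠ r) (h4 : s' ≠ s)
    (hlw1 : ({r,r',w1} : Finset P) ∈ L) (hlw2 : ({r,s',w2} : Finset P) ∈ L) :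
    w1 ≠ p ∧ Collinear' L p w1 := by
  obtain ⟨hpr, hps, hrs⟩ := mem_line_ne hcard hl1
  obtain ⟨hpr', hps', hr's'⟩ := mem_line_ne hcard hl2
  obtain ⟨hrr'', hrw1, hr'w1⟩ := mem_line_ne hcard hlw1
  obtain ⟨hrs'', hrw2, hs'w2⟩ := mem_line_ne hcard hlw2
  have hw1p : w1 ≠ p := fun h => fs_aux_wp hcard hunique hl1 hl2 h1 h2 hlw1 h
  refine ⟨hw1p, ?_⟩
  have hD : ({s, w1, w2} : Finset P) ∈ L := by
    have := tc_image hcard hunique hfischer (x := r) hl2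
    rwa [tc_line hcard hunique (lswap12 hl1), tc_line hcard hunique hlw1,
      tc_line hcard hunique hlw2] at this
  by_contra hnc
  have himg1 : ({s, s', w1} : Finset P) ∈ L := by
    have := tc_image hcard hunique hfischer (x := p) hlw1
    rwa [tc_line hcard hunique hl1, tc_line hcard hunique hl2, tc_perp hnc] at this
  have hncw1p : ¬Collinear' L w1 p := fun h => hnc (coll_symm h)
  have himg3 : ({p, r', w2} : Finset P) ∈ L := by
    have := tc_image hcard hunique hfischer (x := w1) hl1
    rwa [tc_perp hncw1p, tc_line hcard hunique (lrot (lrot hlw1)),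
      tc_line hcard hunique (lswap12 hD)] at this
  have heq : ({p, r', w2} : Finset P) = {p,r',s'} :=
    hunique _ himg3 _ hl2 p r' hpr' (by simp) (by simp) (by simp) (by simp)
  have hmem : w2 ∈ ({p,r',s'} : Finset P) := heq ▸ (by simp)
  have hw2p : w2 ≠ p := by
    intro h
    rw [h] at hlw2
    have heqB : ({r,s',p} : Finset P) = {p,r,s} :=
      hunique _ hlw2 _ hl1 p r hpr (by simp) (by simp) (by simp) (by simp)
    have : s' ∈ ({p,r,s} : Finset P) := heqB ▸ (by simp)
    simp only [Finset.mem_insert, Finset.mem_singleton] at this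
    rcases this with h' | h' | h'
    · exact hps' h'.symm
    · exact h3 h'
    · exact h4 h'
  have hw2r' : w2 ≠ r' := by
    intro h
    rw [h] at hlw2
    have heqB : ({r,s',r'} : Finset P) = {p,r',s'} :=
      hunique _ hlw2 _ hl2 r' s' hr's' (by simp) (by simp) (by simp) (by simp)
    have : r ∈ ({p,r',s'} : Finset P) := heqB ▸ (by simp)
    simp only [Finset.mem_insert, Finset.mem_singleton] at this
    rcases this with h' | h' | h'
    · exact hpr h'.symm
    · exact h1 h'.symm
    · exact h3 h'.symm
  simp only [Finset.mem_insert, Finset.mem_singleton, hw2p, hw2r', false_or] at hmem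
  exact hs'w2 hmem.symm
end Geo3

section Alg
variable {F P M : Type*} [Field F] [DecidableEq P] [NonUnitalNonAssocCommRing M] [Module F M]
  [SMulCommClass F M M] [IsScalarTower F M M]

lemma mem_eigSp {x : M} {lam : F} {y : M} : y ∈ eigSp F x lam ↔ x * y = lam • y := Iff.rfl

lemma mul_mem_of_span (N : Submodule F M) {s t : Set M}
    (h : ∀ x ∈ s, ∀ y ∈ t, x * y ∈ N) :
    ∀ x ∈ Submodule.span F s, ∀ y ∈ Submodule.span F t, x * y ∈ N := by
  intro x hx
  induction hx using Submodule.span_induction with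
  | mem x hxs =>
    intro y hy
    induction hy using Submodule.span_induction with
    | mem y hyt => exact h _ hxs _ hyt
    | zero => rw [mul_zero]; exact N.zero_mem
    | add y z _ _ hy hz => rw [mul_add]; exact N.add_mem hy hz
    | smul c y _ hy => rw [mul_smul_comm]; exact N.smul_mem c hy
  | zero => intro y hy; rw [zero_mul]; exact N.zero_mem
  | add x z _ _ hx hz => intro y hy; rw [add_mul]; exact N.add_mem (hx y hy) (hz y hy)
  | smul c x _ hx => intro y hy; rw [smul_mul_assoc]; exact N.smul_mem c (hx y hy)

variable {η : F} {L : Set (Finset P)}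

/-- Generators of the 0-eigenspace of `a p`. -/
def matG0 (L : Set (Finset P)) (a : P → M) (η : F) (p : P) : Set M :=
  {x | ∃ q, q ≠ p ∧ ¬ Collinear' L p q ∧ x = a q} ∪
  {x | ∃ r s, ({p, r, s} : Finset P) ∈ L ∧ x = a r + a s - η • a p}

/-- Generators of the `η`-eigenspace of `a p`. -/
def matGd (L : Set (Finset P)) (a : P → M) (p : P) : Set M :=
  {x | ∃ r s, ({p, r, s} : Finset P) ∈ L ∧ x = a r - a s}

variable {a : P → M} {p : P}
variable (h2 : (2 : F) ≠ 0)
variable (hcard : ∀ l ∈ L, l.card = 3)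
variable (hunique : ∀ l₁ ∈ L, ∀ l₂ ∈ L, ∀ p q : P,
      p ≠ q → p ∈ l₁ → q ∈ l₁ → p ∈ l₂ → q ∈ l₂ → l₁ = l₂)
variable (hfischer : ∀ (x : P) (t : P → P), IsCentralMap L x t → ∀ l ∈ L, l.image t ∈ L)
variable (hidem : ∀ q : P, a q * a q = a q)
variable (hperp : ∀ q q' : P, q ≠ q' → ¬ Collinear' L q q' → a q * a q' = 0)
variable (hline : ∀ q r s : P, ({q, r, s} : Finset P) ∈ L →
      a q * a r = (η / 2) • (a q + a r - a s))

include h2 hidem hperp hline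

lemma ap_mem1 : a p ∈ eigSp F (a p) (1 : F) :=
  mem_eigSp.2 (by rw [one_smul]; exact hidem p)

lemma perp_mem0 {q : P} (hq : q ≠ p) (hnq : ¬ Collinear' L p q) :
    a q ∈ eigSp F (a p) (0 : F) :=
  mem_eigSp.2 (by rw [zero_smul]; exact hperp p q (Ne.symm hq) hnq)

include hcard

lemma v_mem0 {r s : P} (hl : ({p, r, s} : Finset P) ∈ L) :
    a r + a s - η • a p ∈ eigSp F (a p) (0 : F) := by
  refine mem_eigSp.2 ?_
  rw [zero_smul, mul_sub, mul_add, mul_smul_comm, hline p r s hl,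
    hline p s r (lswap23 hl), hidem p]
  match_scalars <;> (try field_simp) <;> (try ring)

lemma d_memη {r s : P} (hl : ({p, r, s} : Finset P) ∈ L) :
    a r - a s ∈ eigSp F (a p) η := by
  refine mem_eigSp.2 ?_
  rw [mul_sub, hline p r s hl, hline p s r (lswap23 hl)]
  match_scalars <;> (try field_simp) <;> (try ring)

include hunique hfischer

/-- `a q * a q' ∈ M₀` for `q, q' ⟂ p`. -/
lemma mulA1 {q q' : P} (hq : q ≠ p) (hnq : ¬ Collinear' L p q)
    (hq' : q' ≠ p) (hnq' : ¬ Collinear' L p q') :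
    a q * a q' ∈ eigSp F (a p) (0 : F) := by
  by_cases he : q = q'
  · subst he
    rw [hidem q]
    exact perp_mem0 h2 hidem hperp hline hq hnq
  by_cases hc : Collinear' L q q'
  · obtain ⟨hlw, _, _⟩ := coll_line hcard hunique hc he
    obtain ⟨hwp, hnw⟩ := fsGA hcard hunique hfischer hnq hnq' hlw
    refine mem_eigSp.2 ?_
    rw [zero_smul, hline q q' _ hlw, mul_smul_comm, mul_sub, mul_add,
      hperp p q (Ne.symm hq) hnq, hperp p q' (Ne.symm hq') hnq',
      hperp p _ (Ne.symm hwp) hnw]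
    simp
  · rw [hperp q q' he hc]
    exact Submodule.zero_mem _

/-- `a q * v ∈ M₀` for `q ⟂ p` and `v` a line generator. -/
lemma mulA2 {q r s : P} (hq : q ≠ p) (hnq : ¬ Collinear' L p q)
    (hl1 : ({p, r, s} : Finset P) ∈ L) :
    a q * (a r + a s - η • a p) ∈ eigSp F (a p) (0 : F) := by
  obtain ⟨hpr, hps, hrs⟩ := mem_line_ne hcard hl1
  have hqr : q ≠ r := fun h => hnq (h ▸ coll_of_mem hl1 (by simp) (by simp))
  have hqs : q ≠ s := fun h => hnq (h ▸ coll_of_mem hl1 (by simp) (by simp))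
  have hqp_mul : a q * a p = 0 := by
    rw [mul_comm]; exact hperp p q (Ne.symm hq) hnq
  by_cases hc : Collinear' L q r
  · obtain ⟨hlw, _, _⟩ := coll_line hcard hunique hc hqr
    obtain ⟨hwp, hcpw, hlqs, hlpw, hneq⟩ := fsGB hcard hunique hfischer hnq hl1 hlw
    have e0 : a p * a q = 0 := hperp p q (Ne.symm hq) hnq
    refine mem_eigSp.2 ?_
    rw [zero_smul]
    simp only [mul_add, mul_sub, mul_smul_comm, hline q r _ hlw, hline q s _ hlqs,
      hqp_mul, e0, hline p r s hl1, hline p s r (lswap23 hl1),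
      hline p _ _ hlpw, hline p _ _ (lswap23 hlpw), hidem, smul_zero,
      mul_zero, zero_mul, sub_zero, add_zero, zero_add]
    match_scalars <;> (try field_simp) <;> (try ring)
  · have hncs : ¬ Collinear' L q s := fun hcs => hc (by
      have := tc_coll hcard hunique hfischer (x := p) hcs
      rwa [tc_perp hnq, tc_line hcard hunique (lswap23 hl1)] at this)
    have hz : a q * (a r + a s - η • a p) = 0 := by
      rw [mul_sub, mul_add, mul_smul_comm, hperp q r hqr hc, hperp q s hqs hncs, hqp_mul]
      simp
    rw [hz]
    exact Submodule.zero_mem _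
end Alg

section Alg1
variable {F P M : Type*} [Field F] [DecidableEq P] [NonUnitalNonAssocCommRing M] [Module F M]
  [SMulCommClass F M M] [IsScalarTower F M M]
variable {η : F} {L : Set (Finset P)} {a : P → M} {p : P}
variable (h2 : (2 : F) ≠ 0)
variable (hcard : ∀ l ∈ L, l.card = 3)
variable (hunique : ∀ l₁ ∈ L, ∀ l₂ ∈ L, ∀ p q : P,
      p ≠ q → p ∈ l₁ → q ∈ l₁ → p ∈ l₂ → q ∈ l₂ → l₁ = l₂)
variable (hfischer : ∀ (x : P) (t : P → P), IsCentralMap L x t → ∀ l ∈ L, l.image t ∈ L)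
variable (hidem : ∀ q : P, a q * a q = a q)
variable (hperp : ∀ q q' : P, q ≠ q' → ¬ Collinear' L q q' → a q * a q' = 0)
variable (hline : ∀ q r s : P, ({q, r, s} : Finset P) ∈ L →
      a q * a r = (η / 2) • (a q + a r - a s))

include h2 hcard hunique hidem hperp hline

/-- `v * v ∈ M₀` for a line generator `v`. -/
lemma mulA3 {r s : P} (hl1 : ({p, r, s} : Finset P) ∈ L) :
    (a r + a s - η • a p) * (a r + a s - η • a p) ∈ eigSp F (a p) (0 : F) := by
  refine mem_eigSp.2 ?_
  rw [zero_smul]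
  simp only [mul_add, mul_sub, add_mul, sub_mul, mul_smul_comm, smul_mul_assoc,
    hline r s p (lrot hl1), hline s r p (lswap12 (lrot hl1)),
    hline r p s (lswap12 hl1), hline s p r (lswap12 (lswap23 hl1)),
    hline p r s hl1, hline p s r (lswap23 hl1), hidem,
    smul_zero, mul_zero, zero_mul, sub_zero, add_zero, zero_add]
  match_scalars <;> (try field_simp) <;> (try ring)

include hfischer

/-- `v * v' ∈ M₀`, case (b). -/
lemma mulA4 {r s r' s' : P}
    (hl1 : ({p, r, s} : Finset P) ∈ L) (hl2 : ({p, r', s'} : Finset P) ∈ L)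
    (hd1 : r' ≠ r) (hd2 : r' ≠ s) (hd3 : s' ≠ r) (hd4 : s' ≠ s)
    (hrr' : Collinear' L r r') (hnrs' : ¬ Collinear' L r s') :
    (a r + a s - η • a p) * (a r' + a s' - η • a p) ∈ eigSp F (a p) (0 : F) := by
  obtain ⟨hlw, _, _⟩ := coll_line hcard hunique hrr' (Ne.symm hd1)
  obtain ⟨hwp, hwnc, hlssw⟩ :=
    fsGD hcard hunique hfischer hl1 hl2 hd1 hd2 hd3 hd4 hlw hnrs'
  have hnsr' : ¬ Collinear' L s r' := fun h => hnrs' (by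
    have := tc_coll hcard hunique hfischer (x := p) h
    rwa [tc_line hcard hunique (lswap23 hl1), tc_line hcard hunique hl2] at this)
  have hrs'ne : r ≠ s' := fun h => hnrs' (h ▸ coll_of_mem hl1 (by simp) (by simp))
  have hsr'ne : s ≠ r' := fun h => hnsr' (h ▸ coll_of_mem hl1 (by simp) (by simp))
  refine mem_eigSp.2 ?_
  rw [zero_smul]
  simp only [mul_add, mul_sub, add_mul, sub_mul, mul_smul_comm, smul_mul_assoc,
    hline r r' _ hlw, hline s s' _ hlssw, hperp r s' hrs'ne hnrs',
    hperp s r' hsr'ne hnsr',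
    hline r p s (lswap12 hl1), hline s p r (lswap12 (lswap23 hl1)),
    hline p r s hl1, hline p s r (lswap23 hl1),
    hline p r' s' hl2, hline p s' r' (lswap23 hl2),
    hperp p _ (Ne.symm hwp) hwnc, hidem,
    smul_zero, mul_zero, zero_mul, sub_zero, add_zero, zero_add]
  match_scalars <;> (try field_simp) <;> (try ring)

set_option maxHeartbeats 1000000 in
/-- `v * v' ∈ M₀`, case (c). -/
lemma mulA5 {r s r' s' : P}
    (hl1 : ({p, r, s} : Finset P) ∈ L) (hl2 : ({p, r', s'} : Finset P) ∈ L)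
    (hd1 : r' ≠ r) (hd2 : r' ≠ s) (hd3 : s' ≠ r) (hd4 : s' ≠ s)
    (hrr' : Collinear' L r r') (hrs' : Collinear' L r s') :
    (a r + a s - η • a p) * (a r' + a s' - η • a p) ∈ eigSp F (a p) (0 : F) := by
  obtain ⟨hlw1, _, _⟩ := coll_line hcard hunique hrr' (Ne.symm hd1)
  obtain ⟨hlw2, _, _⟩ := coll_line hcard hunique hrs' (Ne.symm hd3)
  obtain ⟨hw1p, hcw1⟩ :=
    fsGE hcard hunique hfischer hl1 hl2 hd1 hd2 hd3 hd4 hlw1 hlw2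
  obtain ⟨hw2p, hcw2⟩ :=
    fsGE hcard hunique hfischer hl1 (lswap23 hl2) hd3 hd4 hd1 hd2 hlw2 hlw1
  obtain ⟨hlpw1, _, _⟩ := coll_line hcard hunique hcw1 (Ne.symm hw1p)
  obtain ⟨hlpw2, _, _⟩ := coll_line hcard hunique hcw2 (Ne.symm hw2p)
  have himg1 : ({s, s', tc L p (tc L r r')} : Finset P) ∈ L := by
    have := tc_image hcard hunique hfischer (x := p) hlw1
    rwa [tc_line hcard hunique hl1, tc_line hcard hunique hl2] at this
  have himg2 : ({s, r', tc L p (tc L r s')} : Finset P) ∈ L := by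
    have := tc_image hcard hunique hfischer (x := p) hlw2
    rwa [tc_line hcard hunique hl1, tc_line hcard hunique (lswap23 hl2)] at this
  refine mem_eigSp.2 ?_
  rw [zero_smul]
  simp only [mul_add, mul_sub, add_mul, sub_mul, mul_smul_comm, smul_mul_assoc,
    hline r r' _ hlw1, hline r s' _ hlw2, hline s r' _ himg2, hline s s' _ himg1,
    hline p _ _ hlpw1, hline p _ _ (lswap23 hlpw1),
    hline p _ _ hlpw2, hline p _ _ (lswap23 hlpw2),
    hline r p s (lswap12 hl1), hline s p r (lswap12 (lswap23 hl1)),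
    hline p r s hl1, hline p s r (lswap23 hl1),
    hline p r' s' hl2, hline p s' r' (lswap23 hl2), hidem,
    smul_zero, mul_zero, zero_mul, sub_zero, add_zero, zero_add]
  match_scalars <;> (try field_simp) <;> (try ring)
end Alg1

section Alg2
variable {F P M : Type*} [Field F] [DecidableEq P] [NonUnitalNonAssocCommRing M] [Module F M]
  [SMulCommClass F M M] [IsScalarTower F M M]
variable {η : F} {L : Set (Finset P)} {a : P → M} {p : P}
variable (h2 : (2 : F) ≠ 0)
variable (hcard : ∀ l ∈ L, l.card = 3)
variable (hunique : ∀ l₁ ∈ L, ∀ l₂ ∈ L, ∀ p q : P,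
      p ≠ q → p ∈ l₁ → q ∈ l₁ → p ∈ l₂ → q ∈ l₂ → l₁ = l₂)
variable (hfischer : ∀ (x : P) (t : P → P), IsCentralMap L x t → ∀ l ∈ L, l.image t ∈ L)
variable (hidem : ∀ q : P, a q * a q = a q)
variable (hperp : ∀ q q' : P, q ≠ q' → ¬ Collinear' L q q' → a q * a q' = 0)
variable (hline : ∀ q r s : P, ({q, r, s} : Finset P) ∈ L →
      a q * a r = (η / 2) • (a q + a r - a s))

include h2 hcard hunique hidem hperp hline

/-- `v * d ∈ M_η` for generators from the same line. -/
lemma mulC2 {r s : P} (hl1 : ({p, r, s} : Finset P) ∈ L) :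
    (a r + a s - η • a p) * (a r - a s) ∈ Submodule.span F (matGd L a p) := by
  have hxy : (a r + a s - η • a p) * (a r - a s) = (1 - η * η) • (a r - a s) := by
    simp only [mul_add, mul_sub, add_mul, sub_mul, mul_smul_comm, smul_mul_assoc,
      hline r s p (lrot hl1), hline s r p (lswap12 (lrot hl1)),
      hline p r s hl1, hline p s r (lswap23 hl1),
      hline r p s (lswap12 hl1), hline s p r (lswap12 (lswap23 hl1)), hidem,
      smul_zero, mul_zero, zero_mul, sub_zero, add_zero, zero_add]
    match_scalars <;> (try field_simp) <;> (try ring)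
  rw [hxy]
  exact Submodule.smul_mem _ _ (Submodule.subset_span ⟨r, s, hl1, rfl⟩)

/-- `d * d ∈ M_+` for generators from the same line. -/
lemma mulD1 {r s : P} (hl1 : ({p, r, s} : Finset P) ∈ L) :
    (a r - a s) * (a r - a s) ∈ Submodule.span F ({a p} ∪ matG0 L a η p) := by
  have hxy : (a r - a s) * (a r - a s)
      = (1 - η) • (a r + a s - η • a p) + (2 * η - η * η) • a p := by
    simp only [mul_add, mul_sub, add_mul, sub_mul, mul_smul_comm, smul_mul_assoc,
      hline r s p (lrot hl1), hline s r p (lswap12 (lrot hl1)), hidem,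
      smul_zero, mul_zero, zero_mul, sub_zero, add_zero, zero_add]
    match_scalars <;> (try field_simp) <;> (try ring)
  rw [hxy]
  exact Submodule.add_mem _
    (Submodule.smul_mem _ _ (Submodule.subset_span (Or.inr (Or.inr ⟨r, s, hl1, rfl⟩))))
    (Submodule.smul_mem _ _ (Submodule.subset_span (Or.inl rfl)))

include hfischer

/-- `a q * d ∈ M_η` for `q ⟂ p`. -/
lemma mulC1 {q r s : P} (hq : q ≠ p) (hnq : ¬ Collinear' L p q)
    (hl1 : ({p, r, s} : Finset P) ∈ L) :
    a q * (a r - a s) ∈ Submodule.span F (matGd L a p) := by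
  obtain ⟨hpr, hps, hrs⟩ := mem_line_ne hcard hl1
  have hqr : q ≠ r := fun h => hnq (h ▸ coll_of_mem hl1 (by simp) (by simp))
  have hqs : q ≠ s := fun h => hnq (h ▸ coll_of_mem hl1 (by simp) (by simp))
  by_cases hc : Collinear' L q r
  · obtain ⟨hlw, _, _⟩ := coll_line hcard hunique hc hqr
    obtain ⟨hwp, hcpw, hlqs, hlpw, hneq⟩ := fsGB hcard hunique hfischer hnq hl1 hlw
    have hxy : a q * (a r - a s) = (η / 2) • (a r - a s)
        - (η / 2) • (a (tc L q r) - a (tc L p (tc L q r))) := by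
      rw [mul_sub, hline q r _ hlw, hline q s _ hlqs]
      match_scalars <;> (try field_simp) <;> (try ring)
    rw [hxy]
    exact Submodule.sub_mem _
      (Submodule.smul_mem _ _ (Submodule.subset_span ⟨r, s, hl1, rfl⟩))
      (Submodule.smul_mem _ _ (Submodule.subset_span ⟨_, _, hlpw, rfl⟩))
  · have hncs : ¬ Collinear' L q s := fun hcs => hc (by
      have := tc_coll hcard hunique hfischer (x := p) hcs
      rwa [tc_perp hnq, tc_line hcard hunique (lswap23 hl1)] at this)
    have hz : a q * (a r - a s) = 0 := by
      rw [mul_sub, hperp q r hqr hc, hperp q s hqs hncs, sub_zero]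
    rw [hz]
    exact Submodule.zero_mem _

/-- `v * d' ∈ M_η`, case (b). -/
lemma mulC3 {r s r' s' : P}
    (hl1 : ({p, r, s} : Finset P) ∈ L) (hl2 : ({p, r', s'} : Finset P) ∈ L)
    (hd1 : r' ≠ r) (hd2 : r' ≠ s) (hd3 : s' ≠ r) (hd4 : s' ≠ s)
    (hrr' : Collinear' L r r') (hnrs' : ¬ Collinear' L r s') :
    (a r + a s - η • a p) * (a r' - a s') ∈ Submodule.span F (matGd L a p) := by
  obtain ⟨hlw, _, _⟩ := coll_line hcard hunique hrr' (Ne.symm hd1)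
  obtain ⟨hwp, hwnc, hlssw⟩ :=
    fsGD hcard hunique hfischer hl1 hl2 hd1 hd2 hd3 hd4 hlw hnrs'
  have hnsr' : ¬ Collinear' L s r' := fun h => hnrs' (by
    have := tc_coll hcard hunique hfischer (x := p) h
    rwa [tc_line hcard hunique (lswap23 hl1), tc_line hcard hunique hl2] at this)
  have hrs'ne : r ≠ s' := fun h => hnrs' (h ▸ coll_of_mem hl1 (by simp) (by simp))
  have hsr'ne : s ≠ r' := fun h => hnsr' (h ▸ coll_of_mem hl1 (by simp) (by simp))
  have hxy : (a r + a s - η • a p) * (a r' - a s')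
      = (η / 2) • (a r - a s) + (η / 2 - η * η) • (a r' - a s') := by
    simp only [mul_add, mul_sub, add_mul, sub_mul, mul_smul_comm, smul_mul_assoc,
      hline r r' _ hlw, hline s s' _ hlssw, hperp r s' hrs'ne hnrs',
      hperp s r' hsr'ne hnsr',
      hline p r' s' hl2, hline p s' r' (lswap23 hl2),
      smul_zero, mul_zero, zero_mul, sub_zero, add_zero, zero_add]
    match_scalars <;> (try field_simp) <;> (try ring)
  rw [hxy]
  exact Submodule.add_mem _
    (Submodule.smul_mem _ _ (Submodule.subset_span ⟨r, s, hl1, rfl⟩))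
    (Submodule.smul_mem _ _ (Submodule.subset_span ⟨r', s', hl2, rfl⟩))

set_option maxHeartbeats 1000000 in
/-- `v * d' ∈ M_η`, case (c). -/
lemma mulC4 {r s r' s' : P}
    (hl1 : ({p, r, s} : Finset P) ∈ L) (hl2 : ({p, r', s'} : Finset P) ∈ L)
    (hd1 : r' ≠ r) (hd2 : r' ≠ s) (hd3 : s' ≠ r) (hd4 : s' ≠ s)
    (hrr' : Collinear' L r r') (hrs' : Collinear' L r s') :
    (a r + a s - η • a p) * (a r' - a s') ∈ Submodule.span F (matGd L a p) := by
  obtain ⟨hlw1, _, _⟩ := coll_line hcard hunique hrr' (Ne.symm hd1)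
  obtain ⟨hlw2, _, _⟩ := coll_line hcard hunique hrs' (Ne.symm hd3)
  obtain ⟨hw1p, hcw1⟩ :=
    fsGE hcard hunique hfischer hl1 hl2 hd1 hd2 hd3 hd4 hlw1 hlw2
  obtain ⟨hw2p, hcw2⟩ :=
    fsGE hcard hunique hfischer hl1 (lswap23 hl2) hd3 hd4 hd1 hd2 hlw2 hlw1
  obtain ⟨hlpw1, _, _⟩ := coll_line hcard hunique hcw1 (Ne.symm hw1p)
  obtain ⟨hlpw2, _, _⟩ := coll_line hcard hunique hcw2 (Ne.symm hw2p)
  have himg1 : ({s, s', tc L p (tc L r r')} : Finset P) ∈ L := by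
    have := tc_image hcard hunique hfischer (x := p) hlw1
    rwa [tc_line hcard hunique hl1, tc_line hcard hunique hl2] at this
  have himg2 : ({s, r', tc L p (tc L r s')} : Finset P) ∈ L := by
    have := tc_image hcard hunique hfischer (x := p) hlw2
    rwa [tc_line hcard hunique hl1, tc_line hcard hunique (lswap23 hl2)] at this
  have hxy : (a r + a s - η • a p) * (a r' - a s')
      = (η - η * η) • (a r' - a s')
        - (η / 2) • (a (tc L r r') - a (tc L p (tc L r r')))
        + (η / 2) • (a (tc L r s') - a (tc L p (tc L r s'))) := by
    simp only [mul_add, mul_sub, add_mul, sub_mul, mul_smul_comm, smul_mul_assoc,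
      hline r r' _ hlw1, hline r s' _ hlw2, hline s r' _ himg2, hline s s' _ himg1,
      hline p r' s' hl2, hline p s' r' (lswap23 hl2),
      smul_zero, mul_zero, zero_mul, sub_zero, add_zero, zero_add]
    match_scalars <;> (try field_simp) <;> (try ring)
  rw [hxy]
  exact Submodule.add_mem _
    (Submodule.sub_mem _
      (Submodule.smul_mem _ _ (Submodule.subset_span ⟨r', s', hl2, rfl⟩))
      (Submodule.smul_mem _ _ (Submodule.subset_span ⟨_, _, hlpw1, rfl⟩)))
    (Submodule.smul_mem _ _ (Submodule.subset_span ⟨_, _, hlpw2, rfl⟩))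

/-- `d * d' ∈ M_+`, case (b). -/
lemma mulD2 {r s r' s' : P}
    (hl1 : ({p, r, s} : Finset P) ∈ L) (hl2 : ({p, r', s'} : Finset P) ∈ L)
    (hd1 : r' ≠ r) (hd2 : r' ≠ s) (hd3 : s' ≠ r) (hd4 : s' ≠ s)
    (hrr' : Collinear' L r r') (hnrs' : ¬ Collinear' L r s') :
    (a r - a s) * (a r' - a s') ∈ Submodule.span F ({a p} ∪ matG0 L a η p) := by
  obtain ⟨hlw, _, _⟩ := coll_line hcard hunique hrr' (Ne.symm hd1)
  obtain ⟨hwp, hwnc, hlssw⟩ :=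
    fsGD hcard hunique hfischer hl1 hl2 hd1 hd2 hd3 hd4 hlw hnrs'
  have hnsr' : ¬ Collinear' L s r' := fun h => hnrs' (by
    have := tc_coll hcard hunique hfischer (x := p) h
    rwa [tc_line hcard hunique (lswap23 hl1), tc_line hcard hunique hl2] at this)
  have hrs'ne : r ≠ s' := fun h => hnrs' (h ▸ coll_of_mem hl1 (by simp) (by simp))
  have hsr'ne : s ≠ r' := fun h => hnsr' (h ▸ coll_of_mem hl1 (by simp) (by simp))
  have hxy : (a r - a s) * (a r' - a s')
      = (η / 2) • (a r + a s - η • a p) + (η / 2) • (a r' + a s' - η • a p)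
        + (η * η) • a p - η • a (tc L r r') := by
    simp only [mul_add, mul_sub, add_mul, sub_mul, mul_smul_comm, smul_mul_assoc,
      hline r r' _ hlw, hline s s' _ hlssw, hperp r s' hrs'ne hnrs',
      hperp s r' hsr'ne hnsr',
      smul_zero, mul_zero, zero_mul, sub_zero, add_zero, zero_add]
    match_scalars <;> (try field_simp) <;> (try ring)
  rw [hxy]
  refine Submodule.sub_mem _ (Submodule.add_mem _ (Submodule.add_mem _ ?_ ?_) ?_) ?_
  · exact Submodule.smul_mem _ _ (Submodule.subset_span (Or.inr (Or.inr ⟨r, s, hl1, rfl⟩)))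
  · exact Submodule.smul_mem _ _ (Submodule.subset_span (Or.inr (Or.inr ⟨r', s', hl2, rfl⟩)))
  · exact Submodule.smul_mem _ _ (Submodule.subset_span (Or.inl rfl))
  · exact Submodule.smul_mem _ _
      (Submodule.subset_span (Or.inr (Or.inl ⟨tc L r r', hwp, hwnc, rfl⟩)))

set_option maxHeartbeats 1000000 in
/-- `d * d' ∈ M_+`, case (c). -/
lemma mulD3 {r s r' s' : P}
    (hl1 : ({p, r, s} : Finset P) ∈ L) (hl2 : ({p, r', s'} : Finset P) ∈ L)
    (hd1 : r' ≠ r) (hd2 : r' ≠ s) (hd3 : s' ≠ r) (hd4 : s' ≠ s)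
    (hrr' : Collinear' L r r') (hrs' : Collinear' L r s') :
    (a r - a s) * (a r' - a s') ∈ Submodule.span F ({a p} ∪ matG0 L a η p) := by
  obtain ⟨hlw1, _, _⟩ := coll_line hcard hunique hrr' (Ne.symm hd1)
  obtain ⟨hlw2, _, _⟩ := coll_line hcard hunique hrs' (Ne.symm hd3)
  obtain ⟨hw1p, hcw1⟩ :=
    fsGE hcard hunique hfischer hl1 hl2 hd1 hd2 hd3 hd4 hlw1 hlw2
  obtain ⟨hw2p, hcw2⟩ :=
    fsGE hcard hunique hfischer hl1 (lswap23 hl2) hd3 hd4 hd1 hd2 hlw2 hlw1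
  obtain ⟨hlpw1, _, _⟩ := coll_line hcard hunique hcw1 (Ne.symm hw1p)
  obtain ⟨hlpw2, _, _⟩ := coll_line hcard hunique hcw2 (Ne.symm hw2p)
  have himg1 : ({s, s', tc L p (tc L r r')} : Finset P) ∈ L := by
    have := tc_image hcard hunique hfischer (x := p) hlw1
    rwa [tc_line hcard hunique hl1, tc_line hcard hunique hl2] at this
  have himg2 : ({s, r', tc L p (tc L r s')} : Finset P) ∈ L := by
    have := tc_image hcard hunique hfischer (x := p) hlw2
    rwa [tc_line hcard hunique hl1, tc_line hcard hunique (lswap23 hl2)] at this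
  have hxy : (a r - a s) * (a r' - a s')
      = (η / 2) • (a (tc L r s') + a (tc L p (tc L r s')) - η • a p)
        - (η / 2) • (a (tc L r r') + a (tc L p (tc L r r')) - η • a p) := by
    simp only [mul_add, mul_sub, add_mul, sub_mul, mul_smul_comm, smul_mul_assoc,
      hline r r' _ hlw1, hline r s' _ hlw2, hline s r' _ himg2, hline s s' _ himg1,
      smul_zero, mul_zero, zero_mul, sub_zero, add_zero, zero_add]
    match_scalars <;> (try field_simp) <;> (try ring)
  rw [hxy]
  exact Submodule.sub_mem _
    (Submodule.smul_mem _ _ (Submodule.subset_span (Or.inr (Or.inr ⟨_, _, hlpw2, rfl⟩))))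
    (Submodule.smul_mem _ _ (Submodule.subset_span (Or.inr (Or.inr ⟨_, _, hlpw1, rfl⟩))))
end Alg2

section Alg3
variable {F P M : Type*} [Field F] [DecidableEq P] [NonUnitalNonAssocCommRing M] [Module F M]
  [SMulCommClass F M M] [IsScalarTower F M M]
variable {η : F} {L : Set (Finset P)} {a : P → M} {p : P}
variable (h2 : (2 : F) ≠ 0)
variable (hcard : ∀ l ∈ L, l.card = 3)
variable (hunique : ∀ l₁ ∈ L, ∀ l₂ ∈ L, ∀ p q : P,
      p ≠ q → p ∈ l₁ → q ∈ l₁ → p ∈ l₂ → q ∈ l₂ → l₁ = l₂)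
variable (hfischer : ∀ (x : P) (t : P → P), IsCentralMap L x t → ∀ l ∈ L, l.image t ∈ L)
variable (hidem : ∀ q : P, a q * a q = a q)
variable (hperp : ∀ q q' : P, q ≠ q' → ¬ Collinear' L q q' → a q * a q' = 0)
variable (hline : ∀ q r s : P, ({q, r, s} : Finset P) ∈ L →
      a q * a r = (η / 2) • (a q + a r - a s))

include h2 hcard hunique hfischer hidem hperp hline

omit h2 hfischer hidem hperp hline in
/-- Distinctness data for two different lines through `p`. -/
lemma lines_distinct {r s r' s' : P}
    (hl1 : ({p, r, s} : Finset P) ∈ L) (hl2 : ({p, r', s'} : Finset P) ∈ L)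
    (heq : ({p, r, s} : Finset P) ≠ ({p, r', s'} : Finset P)) :
    r' ≠ r ∧ r' ≠ s ∧ s' ≠ r ∧ s' ≠ s := by
  obtain ⟨hpr, hps, hrs⟩ := mem_line_ne hcard hl1
  refine ⟨?_, ?_, ?_, ?_⟩ <;> intro h
  · exact heq (hunique _ hl1 _ hl2 p r hpr (by simp) (by simp) (by simp) (by rw [h]; simp))
  · exact heq (hunique _ hl1 _ hl2 p s hps (by simp) (by simp) (by simp) (by rw [h]; simp))
  · exact heq (hunique _ hl1 _ hl2 p r hpr (by simp) (by simp) (by simp)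
      (by rw [h]; simp))
  · exact heq (hunique _ hl1 _ hl2 p s hps (by simp) (by simp) (by simp)
      (by rw [h]; simp))

omit h2 hfischer hidem hperp hline in
/-- Same line through `p`: the generator pair coincides up to swap. -/
lemma lines_same {r s r' s' : P}
    (hl1 : ({p, r, s} : Finset P) ∈ L) (hl2 : ({p, r', s'} : Finset P) ∈ L)
    (heq : ({p, r, s} : Finset P) = ({p, r', s'} : Finset P)) :
    (r' = r ∧ s' = s) ∨ (r' = s ∧ s' = r) := by
  obtain ⟨hpr, hps, hrs⟩ := mem_line_ne hcard hl1
  obtain ⟨hpr', hps', hr's'⟩ := mem_line_ne hcard hl2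
  have hr'm : r' ∈ ({p, r, s} : Finset P) := heq ▸ (by simp)
  have hs'm : s' ∈ ({p, r, s} : Finset P) := heq ▸ (by simp)
  simp only [Finset.mem_insert, Finset.mem_singleton] at hr'm hs'm
  rcases hr'm with h | h | h
  · exact absurd h.symm hpr'
  · rcases hs'm with h' | h' | h'
    · exact absurd h'.symm hps'
    · exact absurd (h'.trans h.symm).symm hr's'
    · exact Or.inl ⟨h, h'⟩
  · rcases hs'm with h' | h' | h'
    · exact absurd h'.symm hps'
    · exact Or.inr ⟨h, h'⟩
    · exact absurd (h'.trans h.symm).symm hr's'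

/-- Products of two `M₀`-generators lie in `M₀`. -/
lemma mulG0G0 : ∀ x ∈ matG0 L a η p, ∀ y ∈ matG0 L a η p,
    x * y ∈ eigSp F (a p) (0 : F) := by
  rintro x (⟨q, hq, hnq, rfl⟩ | ⟨r, s, hl1, rfl⟩) y
      (⟨q', hq', hnq', rfl⟩ | ⟨r', s', hl2, rfl⟩)
  · exact mulA1 h2 hcard hunique hfischer hidem hperp hline hq hnq hq' hnq'
  · exact mulA2 h2 hcard hunique hfischer hidem hperp hline hq hnq hl2
  · rw [mul_comm]
    exact mulA2 h2 hcard hunique hfischer hidem hperp hline hq' hnq' hl1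
  · by_cases heq : ({p, r, s} : Finset P) = ({p, r', s'} : Finset P)
    · rcases lines_same hcard hunique hl1 hl2 heq with ⟨h1, h1'⟩ | ⟨h1, h1'⟩
      · rw [h1, h1']
        exact mulA3 h2 hcard hunique hidem hperp hline hl1
      · rw [h1, h1']
        rw [show a s + a r - η • a p = a r + a s - η • a p from by rw [add_comm]]
        exact mulA3 h2 hcard hunique hidem hperp hline hl1
    · obtain ⟨hd1, hd2, hd3, hd4⟩ := lines_distinct hcard hunique hl1 hl2 heq
      rcases fsGC hcard hunique hfischer hl1 hl2 hd1 hd2 hd3 hd4 with hrr' | hrs'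
      · by_cases hx : Collinear' L r s'
        · exact mulA5 h2 hcard hunique hfischer hidem hperp hline hl1 hl2
            hd1 hd2 hd3 hd4 hrr' hx
        · exact mulA4 h2 hcard hunique hfischer hidem hperp hline hl1 hl2
            hd1 hd2 hd3 hd4 hrr' hx
      · by_cases hx : Collinear' L r r'
        · exact mulA5 h2 hcard hunique hfischer hidem hperp hline hl1 hl2
            hd1 hd2 hd3 hd4 hx hrs'
        · rw [show a r' + a s' - η • a p = a s' + a r' - η • a p from by rw [add_comm]]
          exact mulA4 h2 hcard hunique hfischer hidem hperp hline hl1 (lswap23 hl2)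
            hd3 hd4 hd1 hd2 hrs' hx

/-- Products of an `M₀`-generator with an `M_η`-generator lie in `span (matGd)`. -/
lemma mulG0Gd : ∀ x ∈ matG0 L a η p, ∀ y ∈ matGd L a p,
    x * y ∈ Submodule.span F (matGd L a p) := by
  rintro x (⟨q, hq, hnq, rfl⟩ | ⟨r, s, hl1, rfl⟩) y ⟨r', s', hl2, rfl⟩
  · exact mulC1 h2 hcard hunique hfischer hidem hperp hline hq hnq hl2
  · by_cases heq : ({p, r, s} : Finset P) = ({p, r', s'} : Finset P)
    · rcases lines_same hcard hunique hl1 hl2 heq with ⟨h1, h1'⟩ | ⟨h1, h1'⟩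
      · rw [h1, h1']
        exact mulC2 h2 hcard hunique hidem hperp hline hl1
      · rw [h1, h1']
        rw [show a s - a r = -(a r - a s) from (neg_sub _ _).symm, mul_neg]
        exact Submodule.neg_mem _ (mulC2 h2 hcard hunique hidem hperp hline hl1)
    · obtain ⟨hd1, hd2, hd3, hd4⟩ := lines_distinct hcard hunique hl1 hl2 heq
      rcases fsGC hcard hunique hfischer hl1 hl2 hd1 hd2 hd3 hd4 with hrr' | hrs'
      · by_cases hx : Collinear' L r s'
        · exact mulC4 h2 hcard hunique hfischer hidem hperp hline hl1 hl2
            hd1 hd2 hd3 hd4 hrr' hx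
        · exact mulC3 h2 hcard hunique hfischer hidem hperp hline hl1 hl2
            hd1 hd2 hd3 hd4 hrr' hx
      · by_cases hx : Collinear' L r r'
        · exact mulC4 h2 hcard hunique hfischer hidem hperp hline hl1 hl2
            hd1 hd2 hd3 hd4 hx hrs'
        · rw [show a r' - a s' = -(a s' - a r') from (neg_sub _ _).symm, mul_neg]
          exact Submodule.neg_mem _
            (mulC3 h2 hcard hunique hfischer hidem hperp hline hl1 (lswap23 hl2)
              hd3 hd4 hd1 hd2 hrs' hx)

/-- Products of two `M_η`-generators lie in `span ({a p} ∪ matG0)`. -/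
lemma mulGdGd : ∀ x ∈ matGd L a p, ∀ y ∈ matGd L a p,
    x * y ∈ Submodule.span F ({a p} ∪ matG0 L a η p) := by
  rintro x ⟨r, s, hl1, rfl⟩ y ⟨r', s', hl2, rfl⟩
  by_cases heq : ({p, r, s} : Finset P) = ({p, r', s'} : Finset P)
  · rcases lines_same hcard hunique hl1 hl2 heq with ⟨h1, h1'⟩ | ⟨h1, h1'⟩
    · rw [h1, h1']
      exact mulD1 h2 hcard hunique hidem hperp hline hl1
    · rw [h1, h1']
      rw [show a s - a r = -(a r - a s) from (neg_sub _ _).symm, mul_neg]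
      exact Submodule.neg_mem _ (mulD1 h2 hcard hunique hidem hperp hline hl1)
  · obtain ⟨hd1, hd2, hd3, hd4⟩ := lines_distinct hcard hunique hl1 hl2 heq
    rcases fsGC hcard hunique hfischer hl1 hl2 hd1 hd2 hd3 hd4 with hrr' | hrs'
    · by_cases hx : Collinear' L r s'
      · exact mulD3 h2 hcard hunique hfischer hidem hperp hline hl1 hl2
          hd1 hd2 hd3 hd4 hrr' hx
      · exact mulD2 h2 hcard hunique hfischer hidem hperp hline hl1 hl2
          hd1 hd2 hd3 hd4 hrr' hx
    · by_cases hx : Collinear' L r r'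
      · exact mulD3 h2 hcard hunique hfischer hidem hperp hline hl1 hl2
          hd1 hd2 hd3 hd4 hx hrs'
      · rw [show a r' - a s' = -(a s' - a r') from (neg_sub _ _).symm, mul_neg]
        exact Submodule.neg_mem _
          (mulD2 h2 hcard hunique hfischer hidem hperp hline hl1 (lswap23 hl2)
            hd3 hd4 hd1 hd2 hrs' hx)
end Alg3

/-- Let `Π = (P, L)` be a partial triple system which is a Fischer space
(every central map sends lines to lines).  Then in the Matsuo algebra
`M = M(Π, η/2, F)` — the free `F`-module on `P`, with basis `(a_p)`, where
`a_p·a_p = a_p`, `a_p·a_q = 0` for distinct non-collinear `p, q`, and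
`a_p·a_r = (η/2)•(a_p + a_r − a_s)` for each line `{p, r, s}` — every `a_p` is a
primitive axis of Jordan type `η`; consequently `M` is a primitive axial algebra of
Jordan type `η` generated by the axes `{a_p : p ∈ P}`. -/
theorem matsuo_algebra_of_fischer_space_is_jordan_type
    {F P M : Type*} [Field F] [DecidableEq P] [NonUnitalNonAssocCommRing M] [Module F M]
    [SMulCommClass F M M] [IsScalarTower F M M]
    (h2 : (2 : F) ≠ 0) (η : F) (hη0 : η ≠ 0) (hη1 : η ≠ 1)
    (L : Set (Finset P))
    (hcard : ∀ l ∈ L, l.card = 3)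
    (hunique : ∀ l₁ ∈ L, ∀ l₂ ∈ L, ∀ p q : P,
      p ≠ q → p ∈ l₁ → q ∈ l₁ → p ∈ l₂ → q ∈ l₂ → l₁ = l₂)
    (hfischer : ∀ (x : P) (t : P → P), IsCentralMap L x t → ∀ l ∈ L, l.image t ∈ L)
    (a : Module.Basis P F M)
    (hidem : ∀ p : P, a p * a p = a p)
    (hperp : ∀ p q : P, p ≠ q → ¬ Collinear' L p q → a p * a q = 0)
    (hline : ∀ p r s : P, ({p, r, s} : Finset P) ∈ L →
      a p * a r = (η / 2) • (a p + a r - a s)) :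
    (∀ p : P,
      a p * a p = a p ∧
      (∀ x : M, ∃! t : M × M × M, t.1 ∈ eigSp F (a p) (1 : F) ∧
        t.2.1 ∈ eigSp F (a p) (0 : F) ∧ t.2.2 ∈ eigSp F (a p) η ∧
        x = t.1 + t.2.1 + t.2.2) ∧
      eigSp F (a p) (1 : F) = Submodule.span F {a p} ∧
      (∀ y ∈ eigSp F (a p) (0 : F), ∀ z ∈ eigSp F (a p) (0 : F),
        y * z ∈ eigSp F (a p) (0 : F)) ∧
      (∀ y ∈ eigSp F (a p) (1 : F) ⊔ eigSp F (a p) (0 : F),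
       ∀ z ∈ eigSp F (a p) (1 : F) ⊔ eigSp F (a p) (0 : F),
        y * z ∈ eigSp F (a p) (1 : F) ⊔ eigSp F (a p) (0 : F)) ∧
      (∀ y ∈ eigSp F (a p) (1 : F) ⊔ eigSp F (a p) (0 : F),
       ∀ z ∈ eigSp F (a p) η, y * z ∈ eigSp F (a p) η) ∧
      (∀ y ∈ eigSp F (a p) η, ∀ z ∈ eigSp F (a p) η,
        y * z ∈ eigSp F (a p) (1 : F) ⊔ eigSp F (a p) (0 : F))) ∧
    NonUnitalAlgebra.adjoin F (Set.range a) = ⊤ := by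
  constructor
  · intro p
    -- containments of the spans of the explicit generators in the eigenspaces
    have hE1le : Submodule.span F {(a p : M)} ≤ eigSp F (a p) (1 : F) := by
      rw [Submodule.span_le]
      rintro x hx
      rw [Set.mem_singleton_iff] at hx; subst hx
      exact ap_mem1 h2 hidem hperp hline
    have hE0le : Submodule.span F (matG0 L (⇑a) η p) ≤ eigSp F (a p) (0 : F) := by
      rw [Submodule.span_le]
      rintro x (⟨q, hq, hnq, rfl⟩ | ⟨r, s, hl, rfl⟩)
      · exact perp_mem0 h2 hidem hperp hline hq hnq
      · exact v_mem0 h2 hcard hidem hperp hline hl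
    have hEdle : Submodule.span F (matGd L (⇑a) p) ≤ eigSp F (a p) η := by
      rw [Submodule.span_le]
      rintro x ⟨r, s, hl, rfl⟩
      exact d_memη h2 hcard hidem hperp hline hl
    -- spanning
    have htop : Submodule.span F {(a p : M)} ⊔ Submodule.span F (matG0 L (⇑a) η p)
        ⊔ Submodule.span F (matGd L (⇑a) p) = ⊤ := by
      rw [eq_top_iff, ← a.span_eq, Submodule.span_le]
      rintro x ⟨q, rfl⟩
      by_cases hq : q = p
      · subst hq
        exact SetLike.mem_coe.2 (Submodule.mem_sup_left (Submodule.mem_sup_left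
          (Submodule.subset_span rfl)))
      by_cases hc : Collinear' L p q
      · obtain ⟨hl, _, _⟩ := coll_line hcard hunique hc (Ne.symm hq)
        have hkey : (a q : M) = (η / 2) • a p
            + (2⁻¹ : F) • (a q + a (tc L p q) - η • a p)
            + (2⁻¹ : F) • (a q - a (tc L p q)) := by
          match_scalars <;> (try field_simp) <;> (try ring)
        refine SetLike.mem_coe.2 ?_
        rw [hkey]
        refine Submodule.add_mem _ (Submodule.add_mem _ ?_ ?_) ?_
        · exact Submodule.mem_sup_left (Submodule.mem_sup_left
            (Submodule.smul_mem _ _ (Submodule.subset_span rfl)))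
        · exact Submodule.mem_sup_left (Submodule.mem_sup_right
            (Submodule.smul_mem _ _
              (Submodule.subset_span (Or.inr ⟨q, tc L p q, hl, rfl⟩))))
        · exact Submodule.mem_sup_right
            (Submodule.smul_mem _ _ (Submodule.subset_span ⟨q, tc L p q, hl, rfl⟩))
      · exact SetLike.mem_coe.2 (Submodule.mem_sup_left (Submodule.mem_sup_right
          (Submodule.subset_span (Or.inl ⟨q, hq, hc, rfl⟩))))
    -- directness
    have hdir : ∀ u v w : M, u ∈ eigSp F (a p) (1 : F) → v ∈ eigSp F (a p) (0 : F) →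
        w ∈ eigSp F (a p) η → u + v + w = 0 → u = 0 ∧ v = 0 ∧ w = 0 := by
      intro u v w hu hv hw hsum
      have hu' : a p * u = u := by have := mem_eigSp.1 hu; rwa [one_smul] at this
      have hv' : a p * v = 0 := by have := mem_eigSp.1 hv; rwa [zero_smul] at this
      have hw' : a p * w = η • w := mem_eigSp.1 hw
      have e1 : u + η • w = 0 := by
        have h := congrArg (fun z => a p * z) hsum
        simpa [mul_add, hu', hv', hw'] using h
      have e2 : u + (η * η) • w = 0 := by
        have h := congrArg (fun z => a p * z) e1
        simpa [mul_add, hu', hw', mul_smul_comm, smul_smul] using h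
      have hcne : η * η - η ≠ 0 := by
        have h := mul_ne_zero hη0 (sub_ne_zero.2 hη1)
        intro hh; apply h; linear_combination hh
      have hw0 : w = 0 := by
        have a1 : η • w = -u := by rw [eq_neg_iff_add_eq_zero, add_comm]; exact e1
        have a2 : (η * η) • w = -u := by rw [eq_neg_iff_add_eq_zero, add_comm]; exact e2
        have h3 : (η * η - η) • w = 0 := by rw [sub_smul, a1, a2, sub_self]
        calc w = (η * η - η)⁻¹ • ((η * η - η) • w) := (inv_smul_smul₀ hcne w).symm
        _ = 0 := by rw [h3, smul_zero]
      have hu0 : u = 0 := by simpa [hw0] using e1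
      exact ⟨hu0, by simpa [hu0, hw0] using hsum, hw0⟩
    -- decomposition
    have hdecomp : ∀ x : M, ∃ u ∈ Submodule.span F {(a p : M)},
        ∃ v ∈ Submodule.span F (matG0 L (⇑a) η p),
        ∃ w ∈ Submodule.span F (matGd L (⇑a) p), x = u + v + w := by
      intro x
      have hx : x ∈ (⊤ : Submodule F M) := Submodule.mem_top
      rw [← htop] at hx
      obtain ⟨y, hy, w, hw, hx'⟩ := Submodule.mem_sup.1 hx
      obtain ⟨u, hu, v, hv, hy'⟩ := Submodule.mem_sup.1 hy
      exact ⟨u, hu, v, hv, w, hw, by rw [← hx', ← hy']⟩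
    -- eigenspace identifications
    have heq1 : eigSp F (a p) (1 : F) = Submodule.span F {(a p : M)} := by
      refine le_antisymm ?_ hE1le
      intro x hx
      obtain ⟨u, hu, v, hv, w, hw, hsum⟩ := hdecomp x
      obtain ⟨z1, _, _⟩ := hdir (u - x) v w (Submodule.sub_mem _ (hE1le hu) hx)
        (hE0le hv) (hEdle hw) (by rw [hsum]; abel)
      rw [show x = u from (sub_eq_zero.1 z1).symm]
      exact hu
    have heq0 : eigSp F (a p) (0 : F) = Submodule.span F (matG0 L (⇑a) η p) := by
      refine le_antisymm ?_ hE0le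
      intro x hx
      obtain ⟨u, hu, v, hv, w, hw, hsum⟩ := hdecomp x
      obtain ⟨z1, z2, z3⟩ := hdir u (v - x) w (hE1le hu)
        (Submodule.sub_mem _ (hE0le hv) hx) (hEdle hw) (by rw [hsum]; abel)
      rw [show x = v from (sub_eq_zero.1 z2).symm]
      exact hv
    have heqd : eigSp F (a p) η = Submodule.span F (matGd L (⇑a) p) := by
      refine le_antisymm ?_ hEdle
      intro x hx
      obtain ⟨u, hu, v, hv, w, hw, hsum⟩ := hdecomp x
      obtain ⟨z1, z2, z3⟩ := hdir u v (w - x) (hE1le hu) (hE0le hv)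
        (Submodule.sub_mem _ (hEdle hw) hx) (by rw [hsum]; abel)
      rw [show x = w from (sub_eq_zero.1 z3).symm]
      exact hw
    have hsup : eigSp F (a p) (1 : F) ⊔ eigSp F (a p) (0 : F)
        = Submodule.span F ({(a p : M)} ∪ matG0 L (⇑a) η p) := by
      rw [heq1, heq0, Submodule.span_union]
    refine ⟨hidem p, ?_, heq1, ?_, ?_, ?_, ?_⟩
    · -- existence and uniqueness of the decomposition
      intro x
      obtain ⟨u, hu, v, hv, w, hw, hsum⟩ := hdecomp x
      refine ⟨(u, v, w), ⟨hE1le hu, hE0le hv, hEdle hw, hsum⟩, ?_⟩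
      rintro ⟨u', v', w'⟩ ⟨m1, m2, m3, hsum'⟩
      have hz : (u' - u) + (v' - v) + (w' - w) = 0 := by
        have h := hsum'.symm.trans hsum
        calc (u' - u) + (v' - v) + (w' - w) = (u' + v' + w') - (u + v + w) := by abel
        _ = 0 := by rw [h, sub_self]
      obtain ⟨z1, z2, z3⟩ := hdir _ _ _ (Submodule.sub_mem _ m1 (hE1le hu))
        (Submodule.sub_mem _ m2 (hE0le hv)) (Submodule.sub_mem _ m3 (hEdle hw)) hz
      exact Prod.ext (sub_eq_zero.1 z1) (Prod.ext (sub_eq_zero.1 z2) (sub_eq_zero.1 z3))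
    · -- M₀ * M₀ ⊆ M₀
      intro y hy z hz
      rw [heq0] at hy hz
      exact mul_mem_of_span _
        (mulG0G0 h2 hcard hunique hfischer hidem hperp hline) y hy z hz
    · -- M₊ * M₊ ⊆ M₊
      intro y hy z hz
      rw [hsup] at hy hz
      refine mul_mem_of_span (eigSp F (a p) (1 : F) ⊔ eigSp F (a p) (0 : F)) ?_ y hy z hz
      rintro x (hx | hx) w (hw | hw)
      · rw [Set.mem_singleton_iff] at hx hw; subst hx; subst hw
        rw [hidem p]
        exact Submodule.mem_sup_left (ap_mem1 h2 hidem hperp hline)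
      · rw [Set.mem_singleton_iff] at hx; subst hx
        have hw0 : a p * w = 0 := by
          have := mem_eigSp.1 (hE0le (Submodule.subset_span hw))
          rwa [zero_smul] at this
        rw [hw0]; exact Submodule.zero_mem _
      · rw [Set.mem_singleton_iff] at hw; subst hw
        have hx0 : a p * x = 0 := by
          have := mem_eigSp.1 (hE0le (Submodule.subset_span hx))
          rwa [zero_smul] at this
        rw [mul_comm, hx0]; exact Submodule.zero_mem _
      · exact Submodule.mem_sup_right
          (mulG0G0 h2 hcard hunique hfischer hidem hperp hline x hx w hw)
    · -- M₊ * M₋ ⊆ M₋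
      intro y hy z hz
      rw [hsup] at hy
      rw [heqd] at hz
      refine mul_mem_of_span (eigSp F (a p) η) ?_ y hy z hz
      rintro x (hx | hx) w hw
      · rw [Set.mem_singleton_iff] at hx; subst hx
        have hwm : w ∈ eigSp F (a p) η := hEdle (Submodule.subset_span hw)
        rw [mem_eigSp.1 hwm]
        exact Submodule.smul_mem _ _ hwm
      · exact hEdle (mulG0Gd h2 hcard hunique hfischer hidem hperp hline x hx w hw)
    · -- M₋ * M₋ ⊆ M₊
      intro y hy z hz
      rw [heqd] at hy hz
      refine mul_mem_of_span _ ?_ y hy z hz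
      intro x hx w hw
      have h := mulGdGd h2 hcard hunique hfischer hidem hperp hline x hx w hw
      have hle : Submodule.span F ({(a p : M)} ∪ matG0 L (⇑a) η p)
          ≤ eigSp F (a p) (1 : F) ⊔ eigSp F (a p) (0 : F) := by
        rw [Submodule.span_union]
        exact sup_le_sup hE1le hE0le
      exact hle h
  · -- the algebra is generated by the axes
    rw [eq_top_iff]
    rintro x -
    have hx : x ∈ Submodule.span F (Set.range ⇑a) := by
      rw [a.span_eq]; exact Submodule.mem_top
    induction hx using Submodule.span_induction with
    | mem x hxs => exact NonUnitalAlgebra.subset_adjoin F hxs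
    | zero => exact zero_mem _
    | add u v _ _ hu hv => exact add_mem hu hv
    | smul c u _ hu => exact SMulMemClass.smul_mem c hu
end

section
/- Let ⟨·,·⟩ be the symmetric F-bilinear form on the Matsuo algebra M = M(Π, η/2, F) determined by ⟨a_p, a_p⟩ = 1 for all p ∈ P, ⟨a_p, a_q⟩ = 0 for distinct non-collinear p, q, and ⟨a_p, a_q⟩ = η/2 for collinear p, q. Then ⟨·,·⟩ is associative (⟨u·v, w⟩ = ⟨u, v·w⟩ for all u, v, w ∈ M) if and only if both: (i) for every x ∈ P, the set x^⊥ is a subspace of Π; and (ii) for every line {x, y, z} ∈ L and every line ℓ ∈ L with x ∈ ℓ, one has ℓ ∩ y^⊥ = ∅ if and only if ℓ ∩ z^⊥ = ∅. -/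
/-- `y` lies in `x^⊥`: it is distinct from `x` and not collinear with `x`. -/
def Perp {P : Type*} (L : Set (Finset P)) (x y : P) : Prop :=
  y ≠ x ∧ ¬ Collinear' L x y

section Helpers

variable {P : Type*} [DecidableEq P] {L : Set (Finset P)}

lemma collinear'_symm {p q : P} (h : Collinear' L p q) : Collinear' L q p := by
  obtain ⟨l, hl, hp, hq⟩ := h; exact ⟨l, hl, hq, hp⟩

lemma card_pair_le' (x y : P) : ({x, y} : Finset P).card ≤ 2 :=
  (Finset.card_insert_le _ _).trans (by simp)

lemma card3_distinct {p q r : P} (h : ({p, q, r} : Finset P).card = 3) :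
    p ≠ q ∧ p ≠ r ∧ q ≠ r := by
  refine ⟨?_, ?_, ?_⟩ <;> rintro rfl
  · have hsub : ({p, p, r} : Finset P) ⊆ {p, r} := by
      intro z hz; simp at hz ⊢; tauto
    have := (Finset.card_le_card hsub).trans (card_pair_le' p r)
    omega
  · have hsub : ({p, q, p} : Finset P) ⊆ {p, q} := by
      intro z hz; simp at hz ⊢; tauto
    have := (Finset.card_le_card hsub).trans (card_pair_le' p q)
    omega
  · have hsub : ({p, q, q} : Finset P) ⊆ {p, q} := by
      intro z hz; simp at hz ⊢; tauto
    have := (Finset.card_le_card hsub).trans (card_pair_le' p q)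
    omega

lemma card_triple {p q r : P} (hpq : p ≠ q) (hpr : p ≠ r) (hqr : q ≠ r) :
    ({p, q, r} : Finset P).card = 3 := by
  rw [Finset.card_insert_of_notMem (by simp [hpq, hpr]),
    Finset.card_insert_of_notMem (by simp [hqr]), Finset.card_singleton]

lemma eq_triple {l : Finset P} (hl : l.card = 3) {x w : P}
    (hx : x ∈ l) (hw : w ∈ l) (hxw : x ≠ w) :
    ∃ w', w' ≠ x ∧ w' ≠ w ∧ l = {x, w, w'} := by
  have hsub : ({x, w} : Finset P) ⊆ l := by
    intro z hz; simp at hz; rcases hz with rfl | rfl <;> assumption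
  have hss : ({x, w} : Finset P) ⊂ l := by
    refine hsub.ssubset_of_ne ?_
    intro h
    have := card_pair_le' x w
    rw [h, hl] at this
    omega
  obtain ⟨w', hw'l, hw'n⟩ := Finset.exists_of_ssubset hss
  simp at hw'n
  refine ⟨w', hw'n.1, hw'n.2, ?_⟩
  have hsub3 : ({x, w, w'} : Finset P) ⊆ l := by
    intro z hz; simp at hz
    rcases hz with rfl | rfl | rfl <;> assumption
  have hc3 : ({x, w, w'} : Finset P).card = 3 :=
    card_triple hxw (Ne.symm hw'n.1) (Ne.symm hw'n.2)
  exact (Finset.eq_of_subset_of_card_le hsub3 (by omega)).symm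

end Helpers

/-- let `Π = (P, L)` be a partial triple system and `M = M(Π, η/2, F)` the
Matsuo algebra — the free `F`-module on `P`, with basis `(a_p)`, where `a_p·a_p = a_p`,
`a_p·a_q = 0` for distinct non-collinear `p, q`, and `a_p·a_r = (η/2)•(a_p + a_r − a_s)`
for each line `{p, r, s}`.  The symmetric bilinear form with `⟨a_p, a_p⟩ = 1`,
`⟨a_p, a_q⟩ = 0` for distinct non-collinear `p, q`, and `⟨a_p, a_q⟩ = η/2` for collinear
`p, q` is associative iff (i) every `x^⊥` is a subspace of `Π`, and (ii) for every line
`{x, y, z}` and every line `ℓ` through `x`, `ℓ ∩ y^⊥ = ∅ ↔ ℓ ∩ z^⊥ = ∅`. -/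
theorem matsuo_algebra_frobenius_iff
    {F P M : Type*} [Field F] [DecidableEq P] [NonUnitalNonAssocCommRing M] [Module F M]
    [SMulCommClass F M M] [IsScalarTower F M M]
    (h2 : (2 : F) ≠ 0) (η : F) (hη0 : η ≠ 0) (hη1 : η ≠ 1)
    (L : Set (Finset P))
    (hcard : ∀ l ∈ L, l.card = 3)
    (hunique : ∀ l₁ ∈ L, ∀ l₂ ∈ L, ∀ p q : P,
      p ≠ q → p ∈ l₁ → q ∈ l₁ → p ∈ l₂ → q ∈ l₂ → l₁ = l₂)
    (a : Module.Basis P F M)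
    (hidem : ∀ p : P, a p * a p = a p)
    (hperp : ∀ p q : P, p ≠ q → ¬ Collinear' L p q → a p * a q = 0)
    (hline : ∀ p r s : P, ({p, r, s} : Finset P) ∈ L →
      a p * a r = (η / 2) • (a p + a r - a s))
    (B : M →ₗ[F] M →ₗ[F] F)
    (hB1 : ∀ p : P, B (a p) (a p) = 1)
    (hB0 : ∀ p q : P, p ≠ q → ¬ Collinear' L p q → B (a p) (a q) = 0)
    (hBη : ∀ p q : P, p ≠ q → Collinear' L p q → B (a p) (a q) = η / 2) :
    (∀ u v w : M, B (u * v) w = B u (v * w)) ↔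
      ((∀ x : P, ∀ l ∈ L, ∀ p q : P, p ≠ q → p ∈ l → q ∈ l →
          Perp L x p → Perp L x q → ∀ r ∈ l, Perp L x r) ∧
       (∀ x y z : P, ({x, y, z} : Finset P) ∈ L → ∀ l ∈ L, x ∈ l →
          ((∀ w ∈ l, ¬ Perp L y w) ↔ (∀ w ∈ l, ¬ Perp L z w)))) := by
  have hη2 : η / 2 ≠ 0 := div_ne_zero hη0 h2
  have line_distinct : ∀ p q r : P, ({p, q, r} : Finset P) ∈ L →
      p ≠ q ∧ p ≠ r ∧ q ≠ r := fun p q r h => card3_distinct (hcard _ h)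
  have fsymm : ∀ p q : P, B (a p) (a q) = B (a q) (a p) := by
    intro p q
    by_cases hpq : p = q
    · subst hpq; rfl
    · by_cases hc : Collinear' L p q
      · rw [hBη p q hpq hc, hBη q p (Ne.symm hpq) (collinear'_symm hc)]
      · rw [hB0 p q hpq hc, hB0 q p (Ne.symm hpq) fun h => hc (collinear'_symm h)]
  -- key computations of the form B (a p * a q) (a r) and B (a p) (a q * a r)
  have hcalc : ∀ p q s r : P, ({p, q, s} : Finset P) ∈ L →
      B (a p * a q) (a r)
        = η / 2 * (B (a p) (a r) + B (a q) (a r) - B (a s) (a r)) := by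
    intro p q s r h
    rw [hline p q s h]
    simp only [map_smul, map_sub, map_add, LinearMap.smul_apply, LinearMap.sub_apply,
      LinearMap.add_apply, smul_eq_mul]
  have hcalc2 : ∀ p q r t : P, ({q, r, t} : Finset P) ∈ L →
      B (a p) (a q * a r)
        = η / 2 * (B (a p) (a q) + B (a p) (a r) - B (a p) (a t)) := by
    intro p q r t h
    rw [hline q r t h]
    simp only [map_smul, map_sub, map_add, smul_eq_mul]
  constructor
  · -- associativity implies the two combinatorial conditions
    intro hassoc
    -- relation (A): if p ⊥ q and {q,r,t} is a line then ⟨a p, a r⟩ = ⟨a p, a t⟩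
    have relA : ∀ p q r t : P, p ≠ q → ¬ Collinear' L p q →
        ({q, r, t} : Finset P) ∈ L → B (a p) (a r) = B (a p) (a t) := by
      intro p q r t hpq hnc h
      have h1 := hassoc (a p) (a q) (a r)
      rw [hperp p q hpq hnc, hcalc2 p q r t h, hB0 p q hpq hnc] at h1
      simp only [map_zero, LinearMap.zero_apply, zero_add] at h1
      have h3 : η / 2 * (B (a p) (a r) - B (a p) (a t)) = 0 := h1.symm
      exact sub_eq_zero.mp ((mul_eq_zero.mp h3).resolve_left hη2)
    -- relation (B): if {p,q,s} and {q,r,t} are lines then ⟨a s, a r⟩ = ⟨a p, a t⟩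
    have relB : ∀ p q s r t : P, ({p, q, s} : Finset P) ∈ L →
        ({q, r, t} : Finset P) ∈ L → B (a s) (a r) = B (a p) (a t) := by
      intro p q s r t h1 h2
      obtain ⟨hpq, hps, hqs⟩ := line_distinct p q s h1
      obtain ⟨hqr, hqt, hrt⟩ := line_distinct q r t h2
      have he := hassoc (a p) (a q) (a r)
      rw [hcalc p q s r h1, hcalc2 p q r t h2,
        hBη q r hqr ⟨_, h2, by simp, by simp⟩,
        hBη p q hpq ⟨_, h1, by simp, by simp⟩] at he
      have h3 := mul_left_cancel₀ hη2 he
      linear_combination -h3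
    constructor
    · -- condition (i)
      intro x l hl p q hpq hp hq hxp hxq r hr
      by_cases hrp : r = p
      · subst hrp; exact hxp
      by_cases hrq : r = q
      · subst hrq; exact hxq
      have hsub : ({p, q, r} : Finset P) ⊆ l := by
        intro z hz; simp at hz; rcases hz with rfl | rfl | rfl <;> assumption
      have hleq : ({p, q, r} : Finset P) = l :=
        Finset.eq_of_subset_of_card_le hsub
          (by rw [hcard l hl, card_triple hpq (fun h => hrp h.symm) (fun h => hrq h.symm)])
      have hline' : ({p, r, q} : Finset P) ∈ L := by
        rw [Finset.pair_comm r q, hleq]; exact hl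
      have hval := relA x p r q (Ne.symm hxp.1) hxp.2 hline'
      have hrx : r ≠ x := by
        rintro rfl
        exact hxp.2 ⟨l, hl, hr, hp⟩
      refine ⟨hrx, ?_⟩
      intro hc
      rw [hB0 x q (Ne.symm hxq.1) hxq.2, hBη x r (Ne.symm hrx) hc] at hval
      exact hη2 hval
    · -- condition (ii)
      intro x y z hxyz l hl hx
      have dir : ∀ y z : P, ({x, y, z} : Finset P) ∈ L →
          (∀ w ∈ l, ¬ Perp L y w) → ∀ w ∈ l, ¬ Perp L z w := by
        intro y z hxyz hall w hw hpzw
        obtain ⟨hwz, hnczw⟩ := hpzw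
        by_cases hwx : w = x
        · subst hwx
          exact hnczw ⟨{w, y, z}, hxyz, by simp, by simp⟩
        · obtain ⟨w', hw'x, hw'w, hleq⟩ := eq_triple (hcard l hl) hx hw (Ne.symm hwx)
          have hl1 : ({w, x, w'} : Finset P) ∈ L := by
            rw [Finset.insert_comm, ← hleq]; exact hl
          have hfe := relB w x w' y z hl1 hxyz
          have hz0 : B (a w) (a z) = 0 :=
            hB0 w z hwz (fun h => hnczw (collinear'_symm h))
          rw [hz0] at hfe
          have hw'y := hall w' (by rw [hleq]; simp)
          by_cases hwy' : w' = y
          · subst hwy'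
            rw [hB1] at hfe
            exact one_ne_zero hfe
          · have hcyw' : Collinear' L y w' := by
              by_contra hcc
              exact hw'y ⟨hwy', hcc⟩
            rw [hBη w' y hwy' (collinear'_symm hcyw')] at hfe
            exact hη2 hfe
      constructor
      · exact dir y z hxyz
      · refine dir z y ?_
        rw [Finset.pair_comm z y]; exact hxyz
  · -- the two combinatorial conditions imply associativity
    rintro ⟨hi, hii⟩
    -- lemma (A) from condition (i)
    have lemA : ∀ p q r t : P, p ≠ q → ¬ Collinear' L p q →
        ({q, r, t} : Finset P) ∈ L → B (a p) (a r) = B (a p) (a t) := by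
      intro p q r t hpq hnc hl'
      obtain ⟨hqr, hqt, hrt⟩ := line_distinct q r t hl'
      have hpr : p ≠ r := by
        rintro rfl; exact hnc ⟨_, hl', by simp, by simp⟩
      have hpt : p ≠ t := by
        rintro rfl; exact hnc ⟨_, hl', by simp, by simp⟩
      have hiff : Collinear' L p r ↔ Collinear' L p t := by
        constructor
        · intro hc; by_contra hct
          have := hi p {q, r, t} hl' q t hqt (by simp) (by simp)
            ⟨Ne.symm hpq, hnc⟩ ⟨Ne.symm hpt, hct⟩ r (by simp)
          exact this.2 hc
        · intro hc; by_contra hcr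
          have := hi p {q, r, t} hl' q r hqr (by simp) (by simp)
            ⟨Ne.symm hpq, hnc⟩ ⟨Ne.symm hpr, hcr⟩ t (by simp)
          exact this.2 hc
      by_cases hc : Collinear' L p r
      · rw [hBη p r hpr hc, hBη p t hpt (hiff.mp hc)]
      · rw [hB0 p r hpr hc, hB0 p t hpt fun h => hc (hiff.mpr h)]
    -- one direction of the key collinearity transfer, from (i) and (ii)
    have lemC : ∀ p q s r t : P, ({p, q, s} : Finset P) ∈ L →
        ({q, r, t} : Finset P) ∈ L → r ≠ p → r ≠ s → t ≠ p → t ≠ s →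
        Collinear' L s r → Collinear' L p t := by
      intro p q s r t h1 h2 hrp hrs htp hts hsr
      obtain ⟨hpq, hps, hqs⟩ := line_distinct p q s h1
      obtain ⟨hqr, hqt, hrt⟩ := line_distinct q r t h2
      by_contra hnpt
      have hpr : Collinear' L p r := by
        by_contra hnpr
        have := hi p {q, r, t} h2 r t hrt (by simp) (by simp)
          ⟨hrp, hnpr⟩ ⟨htp, hnpt⟩ q (by simp)
        exact this.2 ⟨_, h1, by simp, by simp⟩
      have hq1 : ({q, p, s} : Finset P) ∈ L := by
        rw [Finset.insert_comm]; exact h1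
      have hii' := hii q p s hq1 {q, r, t} h2 (by simp)
      have hrhs : ¬ ∀ w ∈ ({q, r, t} : Finset P), ¬ Perp L s w := by
        intro hall
        exact (hii'.mpr hall) t (by simp) ⟨htp, hnpt⟩
      push_neg at hrhs
      obtain ⟨w, hwmem, hpsw⟩ := hrhs
      have hw : w = q ∨ w = r ∨ w = t := by simpa using hwmem
      have hst : Perp L s t := by
        rcases hw with rfl | rfl | rfl
        · exact (hpsw.2 ⟨_, h1, by simp, by simp⟩).elim
        · exact (hpsw.2 hsr).elim
        · exact hpsw
      have := hi t {p, q, s} h1 p s hps (by simp) (by simp)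
        ⟨Ne.symm htp, fun h => hnpt (collinear'_symm h)⟩
        ⟨Ne.symm hts, fun h => hst.2 (collinear'_symm h)⟩ q (by simp)
      exact this.2 ⟨_, h2, by simp, by simp⟩
    -- lemma (B) from conditions (i) and (ii)
    have lemB : ∀ p q s r t : P, ({p, q, s} : Finset P) ∈ L →
        ({q, r, t} : Finset P) ∈ L → B (a s) (a r) = B (a p) (a t) := by
      intro p q s r t h1 h2
      obtain ⟨hpq, hps, hqs⟩ := line_distinct p q s h1
      obtain ⟨hqr, hqt, hrt⟩ := line_distinct q r t h2
      by_cases hrp : r = p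
      · subst hrp
        have heq : ({q, r, t} : Finset P) = {r, q, s} :=
          hunique _ h2 _ (by rw [Finset.insert_comm] at h1 ⊢; exact h1) q r hqr
            (by simp) (by simp) (by simp) (by simp)
        have hts' : t = s := by
          have hmem : t ∈ ({r, q, s} : Finset P) := heq ▸ (by simp)
          simp at hmem
          rcases hmem with rfl | rfl | rfl
          · exact absurd rfl hrt.symm
          · exact absurd rfl hqt
          · rfl
        subst hts'
        exact fsymm t r
      · by_cases hrs : r = s
        · subst hrs
          have heq : ({q, r, t} : Finset P) = {p, q, r} :=
          hunique _ h2 _ h1 q r hqr (by simp) (by simp) (by simp) (by simp)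
          have htp' : t = p := by
            have hmem : t ∈ ({p, q, r} : Finset P) := heq ▸ (by simp)
            simp at hmem
            rcases hmem with rfl | rfl | rfl
            · rfl
            · exact absurd rfl hqt
            · exact absurd rfl hrt.symm
          subst htp'
          rw [hB1, hB1]
        · have htp : t ≠ p := by
            rintro rfl
            have heq : ({q, r, t} : Finset P) = {t, q, s} :=
              hunique _ h2 _ h1 q t hqt (by simp) (by simp) (by simp) (by simp)
            have hmem : r ∈ ({t, q, s} : Finset P) := heq ▸ (by simp)
            simp at hmem
            rcases hmem with rfl | rfl | rfl
            · exact absurd rfl hrp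
            · exact absurd rfl hqr.symm
            · exact absurd rfl hrs
          have hts : t ≠ s := by
            rintro rfl
            have heq : ({q, r, t} : Finset P) = {p, q, t} :=
              hunique _ h2 _ h1 q t hqt (by simp) (by simp) (by simp) (by simp)
            have hmem : r ∈ ({p, q, t} : Finset P) := heq ▸ (by simp)
            simp at hmem
            rcases hmem with rfl | rfl | rfl
            · exact absurd rfl hrp
            · exact absurd rfl hqr.symm
            · exact absurd rfl hrt
          have hiff : Collinear' L s r ↔ Collinear' L p t := by
            constructor
            · exact lemC p q s r t h1 h2 hrp hrs htp hts
            · intro h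
              have h1' : ({s, q, p} : Finset P) ∈ L := by
                have : ({s, q, p} : Finset P) = {p, q, s} := by
                  ext x; simp; tauto
                rw [this]; exact h1
              have h2' : ({q, t, r} : Finset P) ∈ L := by
                rw [Finset.pair_comm t r]; exact h2
              exact lemC s q p t r h1' h2' hts htp hrs hrp h
          by_cases hc : Collinear' L s r
          · rw [hBη s r (Ne.symm hrs) hc, hBη p t (Ne.symm htp) (hiff.mp hc)]
          · rw [hB0 s r (Ne.symm hrs) hc, hB0 p t (Ne.symm htp) fun h => hc (hiff.mpr h)]
    -- associativity on basis elements
    have key : ∀ p q r : P, B (a p * a q) (a r) = B (a p) (a q * a r) := by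
      intro p q r
      by_cases hpq : p = q
      · subst hpq
        rw [hidem p]
        by_cases hpr : p = r
        · subst hpr; rw [hidem p]
        · by_cases hc : Collinear' L p r
          · obtain ⟨l, hl, hpl, hrl⟩ := id hc
            obtain ⟨s, hsp, hsr, hleq⟩ := eq_triple (hcard l hl) hpl hrl hpr
            have hls : ({p, r, s} : Finset P) ∈ L := by rw [← hleq]; exact hl
            have hcps : Collinear' L p s := ⟨l, hl, hpl, by rw [hleq]; simp⟩
            rw [hcalc2 p p r s hls, hB1 p, hBη p r hpr hc,
              hBη p s (Ne.symm hsp) hcps]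
            ring
          · rw [hperp p r hpr hc, hB0 p r hpr hc, map_zero]
      · by_cases hqr : q = r
        · subst hqr
          rw [hidem q]
          by_cases hc : Collinear' L p q
          · obtain ⟨l, hl, hpl, hql⟩ := id hc
            obtain ⟨s, hsp, hsq, hleq⟩ := eq_triple (hcard l hl) hpl hql hpq
            have hls : ({p, q, s} : Finset P) ∈ L := by rw [← hleq]; exact hl
            have hcsq : Collinear' L s q := ⟨l, hl, by rw [hleq]; simp, hql⟩
            rw [hcalc p q s q hls, hB1 q, hBη p q hpq hc, hBη s q hsq hcsq]
            ring
          · rw [hperp p q hpq hc, hB0 p q hpq hc, map_zero, LinearMap.zero_apply]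
        · by_cases hcpq : Collinear' L p q
          · obtain ⟨l1, hl1, hpl1, hql1⟩ := id hcpq
            obtain ⟨s, hsp, hsq, hl1eq⟩ := eq_triple (hcard l1 hl1) hpl1 hql1 hpq
            have h1 : ({p, q, s} : Finset P) ∈ L := by rw [← hl1eq]; exact hl1
            by_cases hcqr : Collinear' L q r
            · obtain ⟨l2, hl2, hql2, hrl2⟩ := id hcqr
              obtain ⟨t, htq, htr, hl2eq⟩ := eq_triple (hcard l2 hl2) hql2 hrl2 hqr
              have h2 : ({q, r, t} : Finset P) ∈ L := by rw [← hl2eq]; exact hl2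
              rw [hcalc p q s r h1, hcalc2 p q r t h2, hBη q r hqr hcqr,
                hBη p q hpq hcpq, lemB p q s r t h1 h2]
              ring
            · have h1' : ({q, p, s} : Finset P) ∈ L := by
                rw [Finset.insert_comm]; exact h1
              have e1 : B (a q) (a r) = 0 := hB0 q r hqr hcqr
              have e2 : B (a p) (a r) = B (a s) (a r) := by
                have h3 := lemA r q p s (Ne.symm hqr)
                  (fun h => hcqr (collinear'_symm h)) h1'
                rw [fsymm p r, h3, fsymm]
              rw [hperp q r hqr hcqr, hcalc p q s r h1, e1, e2, map_zero]
              ring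
          · by_cases hcqr : Collinear' L q r
            · obtain ⟨l2, hl2, hql2, hrl2⟩ := id hcqr
              obtain ⟨t, htq, htr, hl2eq⟩ := eq_triple (hcard l2 hl2) hql2 hrl2 hqr
              have h2 : ({q, r, t} : Finset P) ∈ L := by rw [← hl2eq]; exact hl2
              rw [hperp p q hpq hcpq, hcalc2 p q r t h2, hB0 p q hpq hcpq,
                lemA p q r t hpq hcpq h2, map_zero, LinearMap.zero_apply]
              ring
            · rw [hperp p q hpq hcpq, hperp q r hqr hcqr, map_zero, map_zero,
                LinearMap.zero_apply]
    -- extend from the basis to the whole module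
    have step1 : ∀ p q : P, ∀ w : M, B (a p * a q) w = B (a p) (a q * w) := by
      intro p q w
      have h : B (a p * a q) = (B (a p)).comp (LinearMap.mul F M (a q)) := by
        refine a.ext fun r => ?_
        simpa using key p q r
      have := LinearMap.congr_fun h w
      simpa using this
    have step2 : ∀ p : P, ∀ v w : M, B (a p * v) w = B (a p) (v * w) := by
      intro p v w
      have h : (B.flip w).comp (LinearMap.mul F M (a p))
          = (B (a p)).comp ((LinearMap.mul F M).flip w) := by
        refine a.ext fun q => ?_
        simpa [mul_comm] using step1 p q w
      have := LinearMap.congr_fun h v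
      simpa [mul_comm] using this
    intro u v w
    have h : (B.flip w).comp ((LinearMap.mul F M).flip v) = B.flip (v * w) := by
      refine a.ext fun p => ?_
      simpa [mul_comm] using step2 p v w
    have := LinearMap.congr_fun h u
    simpa [mul_comm] using this
end
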